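/- arXiv:2504.14838 — 3 statements merged into one kernel-verified Lean document; each statement's English description precedes it below -/
import Mathlib

section
/- Let (Ω, μ) be a probability space, Y : Ω → ℝ measurable with atomless law (continuous CDF F), and J : Ω → ℝ bounded and measurable. Let η ∈ (0,1) be a continuity point of the upper quantile function Θ(η) = inf{x ∈ ℝ : F(x) ≥ 1 − η}, and assume F is continuous at Θ(η). For n with ⌊ηn⌋ ≥ 1 and i.i.d. samples ω_1,…,ω_n ∼ μ, let T_n = (1/⌊ηn⌋) Σ_{j=1}^{⌊ηn⌋} J(ω_{(j)}), where ω_{(j)} is the sample with the j-th largest Y-value (almost surely unique). Then lim_{n→∞} E[T_n] = E[J | Y ≥ Θ(η)]. -/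
open MeasureTheory Filter Set

/-- The average of `J` over the `k` samples (among `x 0, …, x (n-1)`) with the largest
`Y`-values: a sample is selected iff fewer than `k` samples have a strictly larger `Y`-value.
When the `Y`-values are pairwise distinct (which holds almost surely for an atomless law) and
`1 ≤ k ≤ n`, exactly `k` samples are selected. -/
noncomputable def topQuantileAvg {Ω : Type*} (Y J : Ω → ℝ) (k : ℕ) {n : ℕ}
    (x : Fin n → Ω) : ℝ :=
  (k : ℝ)⁻¹ * ∑ i, if (Finset.univ.filter fun l => Y (x i) < Y (x l)).card < k
    then J (x i) else 0


namespace RetaAux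

variable {Ω : Type*} [MeasurableSpace Ω]

lemma integrable_of_bound (ν : Measure Ω) [IsFiniteMeasure ν]
    {f : Ω → ℝ} (hf : Measurable f) (C : ℝ) (h : ∀ x, |f x| ≤ C) : Integrable f ν :=
  ⟨hf.aestronglyMeasurable, HasFiniteIntegral.of_bounded (C := C)
    (ae_of_all _ (by simpa [Real.norm_eq_abs] using h))⟩

lemma integral_pi_prod (μ : Measure Ω) [IsProbabilityMeasure μ] {m : ℕ}
    (f : Fin m → Ω → ℝ) :
    ∫ z : Fin m → Ω, ∏ i, f i (z i) ∂(Measure.pi fun _ : Fin m => μ)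
      = ∏ i, ∫ a, f i a ∂μ := by
  letI : MeasureSpace Ω := { toMeasurableSpace := ‹_›, volume := μ }
  haveI : SigmaFinite (volume : Measure Ω) := inferInstanceAs (SigmaFinite μ)
  exact MeasureTheory.integral_fintype_prod_eq_prod (𝕜 := ℝ) (fun i => f i)

lemma integral_pi_eval (μ : Measure Ω) [IsProbabilityMeasure μ] {m : ℕ}
    (j : Fin m) (f : Ω → ℝ) :
    ∫ z : Fin m → Ω, f (z j) ∂(Measure.pi fun _ : Fin m => μ) = ∫ a, f a ∂μ := by
  classical
  have h := integral_pi_prod μ (m := m) (fun i a => if i = j then f a else 1)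
  have h1 : ∀ z : Fin m → Ω, (∏ i, if i = j then f (z i) else 1) = f (z j) := by
    intro z
    rw [Finset.prod_ite_eq' Finset.univ j (fun i => f (z i))]
    simp
  have h2 : ∀ i : Fin m, (∫ a, (if i = j then f a else 1) ∂μ)
      = if i = j then ∫ a, f a ∂μ else 1 := by
    intro i; split_ifs <;> simp
  simp only [h1, h2] at h
  rwa [Finset.prod_ite_eq' Finset.univ j (fun _ => ∫ a, f a ∂μ), if_pos (Finset.mem_univ j)] at h

lemma integral_pi_eval_mul_eval (μ : Measure Ω) [IsProbabilityMeasure μ] {m : ℕ}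
    {j j' : Fin m} (hjj : j ≠ j') (f g : Ω → ℝ) :
    ∫ z : Fin m → Ω, f (z j) * g (z j') ∂(Measure.pi fun _ : Fin m => μ)
      = (∫ a, f a ∂μ) * ∫ a, g a ∂μ := by
  classical
  have key : ∀ (F : Fin m → ℝ), (∀ i, i ≠ j → i ≠ j' → F i = 1) →
      ∏ i, F i = F j * F j' := by
    intro F hF
    rw [← Finset.mul_prod_erase Finset.univ F (Finset.mem_univ j),
      ← Finset.mul_prod_erase _ F (Finset.mem_erase.2 ⟨hjj.symm, Finset.mem_univ j'⟩),
      Finset.prod_eq_one, mul_one]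
    intro i hi
    simp only [Finset.mem_erase] at hi
    exact hF i hi.2.1 hi.1
  have h := integral_pi_prod μ (m := m)
    (fun i a => if i = j then f a else if i = j' then g a else 1)
  have h1 : ∀ z : Fin m → Ω,
      (∏ i, if i = j then f (z i) else if i = j' then g (z i) else 1)
        = f (z j) * g (z j') := by
    intro z
    rw [key _ (by intro i hi hi'; simp [hi, hi'])]
    simp [hjj.symm]
  have h2 : ∀ i : Fin m, (∫ a, (if i = j then f a else if i = j' then g a else 1) ∂μ)
      = if i = j then ∫ a, f a ∂μ else if i = j' then ∫ a, g a ∂μ else 1 := by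
    intro i; split_ifs <;> simp
  simp only [h1, h2] at h
  rwa [key _ (by intro i hi hi'; simp [hi, hi']), if_pos rfl, if_neg hjj.symm, if_pos rfl] at h


variable (μ : Measure Ω) (Y : Ω → ℝ)

/-- success probability -/
noncomputable def qq (c : ℝ) : ℝ := (μ {a | c < Y a}).toReal

/-- probability that fewer than `k` of `m` iid samples exceed `c` -/
noncomputable def QQ (m k : ℕ) (c : ℝ) : ℝ :=
  ((Measure.pi fun _ : Fin m => μ)
    {z | (Finset.univ.filter fun j => c < Y (z j)).card < k}).toReal

variable {Y}

lemma measurable_cnt (hY : Measurable Y) (c : ℝ) {m : ℕ} :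
    Measurable fun z : Fin m → Ω => (Finset.univ.filter fun j => c < Y (z j)).card := by
  simp only [Finset.card_filter]
  exact Finset.measurable_sum _ fun j _ => Measurable.ite
    (measurableSet_lt measurable_const (hY.comp (measurable_pi_apply j)))
    measurable_const measurable_const

lemma measurableSet_cntlt (hY : Measurable Y) (c : ℝ) (k : ℕ) {m : ℕ} :
    MeasurableSet {z : Fin m → Ω | (Finset.univ.filter fun j => c < Y (z j)).card < k} :=
  measurableSet_lt (measurable_cnt hY c) measurable_const

variable [IsProbabilityMeasure μ]

lemma qq_nonneg (c : ℝ) : 0 ≤ qq μ Y c := ENNReal.toReal_nonneg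

lemma qq_le_one (c : ℝ) : qq μ Y c ≤ 1 := by
  have := ENNReal.toReal_mono ENNReal.one_ne_top (prob_le_one (μ := μ) (s := {a | c < Y a}))
  simpa [qq] using this

lemma QQ_nonneg (m k : ℕ) (c : ℝ) : 0 ≤ QQ μ Y m k c := ENNReal.toReal_nonneg

lemma QQ_le_one (m k : ℕ) (c : ℝ) : QQ μ Y m k c ≤ 1 := by
  have := ENNReal.toReal_mono ENNReal.one_ne_top
    (prob_le_one (μ := Measure.pi fun _ : Fin m => μ)
      (s := {z | (Finset.univ.filter fun j => c < Y (z j)).card < k}))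
  simpa [QQ] using this

lemma QQ_mono (m k : ℕ) (hY : Measurable Y) : Monotone (QQ μ Y m k) := by
  intro c c' hcc
  refine ENNReal.toReal_mono (measure_ne_top _ _) (measure_mono fun z hz => ?_)
  simp only [mem_setOf_eq] at hz ⊢
  exact lt_of_le_of_lt (Finset.card_le_card (Finset.monotone_filter_right _
    fun j _ hj => lt_of_le_of_lt hcc hj)) hz

/-- Chebyshev-type tail bound for the count. -/
lemma tail_bound (hY : Measurable Y) (c : ℝ) (m : ℕ) {t : ℝ} (ht : 0 < t) :
    ((Measure.pi fun _ : Fin m => μ)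
      {z : Fin m → Ω | t ≤ |((Finset.univ.filter fun j => c < Y (z j)).card : ℝ)
        - m * qq μ Y c|}).toReal ≤ m / t ^ 2 := by
  classical
  set π : Measure (Fin m → Ω) := Measure.pi fun _ : Fin m => μ with hπ
  haveI : IsProbabilityMeasure π := by rw [hπ]; infer_instance
  set p : ℝ := qq μ Y c with hp
  have hp0 : 0 ≤ p := qq_nonneg μ c
  have hp1 : p ≤ 1 := qq_le_one μ c
  set u : Ω → ℝ := fun a => (if c < Y a then 1 else 0) - p with hu
  have hsetc : MeasurableSet {a | c < Y a} := measurableSet_lt measurable_const hY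
  have hum : Measurable u :=
    (Measurable.ite hsetc measurable_const measurable_const).sub measurable_const
  have hub : ∀ a, |u a| ≤ 1 := by
    intro a; rw [abs_le]; simp only [hu]; split_ifs <;> constructor <;> linarith
  have hu0 : ∫ a, u a ∂μ = 0 := by
    have h1 : (fun a => if c < Y a then (1 : ℝ) else 0)
        = Set.indicator {a | c < Y a} (fun _ => (1 : ℝ)) := by
      ext a; simp [Set.indicator_apply]
    have h2 : ∫ a, (if c < Y a then (1 : ℝ) else 0) ∂μ = p := by
      rw [h1, integral_indicator_const (1 : ℝ) hsetc]; simp [hp, qq, measureReal_def]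
    rw [hu]
    rw [integral_sub (integrable_of_bound μ
        (Measurable.ite hsetc measurable_const measurable_const) 1
        (by intro a; split_ifs <;> simp)) (integrable_const p), h2, integral_const]
    simp
  have hSmeas : Measurable fun z : Fin m → Ω => ∑ j, u (z j) :=
    Finset.measurable_sum _ fun j _ => hum.comp (measurable_pi_apply j)
  have hSb : ∀ z : Fin m → Ω, |∑ j, u (z j)| ≤ m := by
    intro z
    calc |∑ j, u (z j)| ≤ ∑ j, |u (z j)| := Finset.abs_sum_le_sum_abs _ _
    _ ≤ ∑ _j : Fin m, (1 : ℝ) := Finset.sum_le_sum fun j _ => hub _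
    _ = m := by simp
  have hSint : Integrable (fun z : Fin m → Ω => (∑ j, u (z j)) ^ 2) π :=
    integrable_of_bound π (hSmeas.pow measurable_const) ((m : ℝ) ^ 2) (by
      intro z
      rw [abs_pow, ← sq_abs]
      exact pow_le_pow_left₀ (abs_nonneg _) (by simpa using hSb z) 2)
  -- variance bound
  have hvar : ∫ z, (∑ j, u (z j)) ^ 2 ∂π ≤ m := by
    have hsq : ∀ z : Fin m → Ω, (∑ j, u (z j)) ^ 2 = ∑ j, ∑ j', u (z j) * u (z j') := by
      intro z; rw [sq, Finset.sum_mul_sum]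
    have hint2 : ∀ j j' : Fin m, Integrable (fun z : Fin m → Ω => u (z j) * u (z j')) π := by
      intro j j'
      exact integrable_of_bound π
        ((hum.comp (measurable_pi_apply j)).mul (hum.comp (measurable_pi_apply j'))) 1
        (by intro z; rw [abs_mul]
            exact mul_le_one₀ (hub _) (abs_nonneg _) (hub _))
    calc ∫ z, (∑ j, u (z j)) ^ 2 ∂π
        = ∑ j : Fin m, ∑ j' : Fin m, ∫ z, u (z j) * u (z j') ∂π := by
          simp_rw [hsq]
          rw [integral_finset_sum _ fun j _ => integrable_finset_sum _ fun j' _ => hint2 j j']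
          exact Finset.sum_congr rfl fun j _ => integral_finset_sum _ fun j' _ => hint2 j j'
      _ = ∑ _j : Fin m, ∫ a, u a * u a ∂μ := by
          refine Finset.sum_congr rfl fun j _ => ?_
          rw [Finset.sum_eq_single j]
          · rw [hπ, integral_pi_eval μ j (fun a => u a * u a)]
          · intro j' _ hj'
            rw [hπ, integral_pi_eval_mul_eval μ (Ne.symm hj'), hu0, zero_mul]
          · intro h; exact absurd (Finset.mem_univ j) h
      _ ≤ ∑ _j : Fin m, (1 : ℝ) := by
          refine Finset.sum_le_sum fun j _ => ?_
          calc ∫ a, u a * u a ∂μ ≤ ∫ _a, (1 : ℝ) ∂μ := by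
                refine integral_mono (integrable_of_bound μ (hum.mul hum) 1 (by
                  intro a; rw [abs_mul]; exact mul_le_one₀ (hub _) (abs_nonneg _) (hub _)))
                  (integrable_const 1) fun a => ?_
                calc u a * u a = |u a| ^ 2 := by rw [sq_abs, sq]
                _ ≤ 1 := by
                    have := hub a
                    nlinarith [abs_nonneg (u a)]
          _ = 1 := by simp
      _ = m := by simp
  -- Chebyshev
  set A : Set (Fin m → Ω) := {z | t ≤ |∑ j, u (z j)|} with hA
  have hAeq : {z : Fin m → Ω | t ≤ |((Finset.univ.filter fun j => c < Y (z j)).card : ℝ)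
      - m * p|} = A := by
    ext z
    have : ((Finset.univ.filter fun j => c < Y (z j)).card : ℝ) - m * p = ∑ j, u (z j) := by
      simp only [hu, Finset.sum_sub_distrib, Finset.sum_const, Finset.card_univ,
        Fintype.card_fin, nsmul_eq_mul]
      congr 1
      rw [Finset.sum_boole]
    simp only [hA, mem_setOf_eq]
    rw [this]
  have hAmeas : MeasurableSet A :=
    measurableSet_le measurable_const hSmeas.abs
  have hcheb : t ^ 2 * (π A).toReal ≤ ∫ z, (∑ j, u (z j)) ^ 2 ∂π := by
    calc t ^ 2 * (π A).toReal = ∫ _z in A, t ^ 2 ∂π := by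
          rw [setIntegral_const]; rw [smul_eq_mul, mul_comm]; rfl
      _ ≤ ∫ z in A, (∑ j, u (z j)) ^ 2 ∂π := by
          refine setIntegral_mono_on (integrableOn_const (measure_ne_top _ _))
            hSint.integrableOn hAmeas fun z hz => ?_
          rw [hA] at hz
          calc t ^ 2 ≤ |∑ j, u (z j)| ^ 2 := pow_le_pow_left₀ ht.le hz 2
          _ = (∑ j, u (z j)) ^ 2 := sq_abs _
      _ ≤ ∫ z, (∑ j, u (z j)) ^ 2 ∂π :=
          setIntegral_le_integral hSint (ae_of_all _ fun z => sq_nonneg _)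
  rw [hAeq]
  rw [le_div_iff₀ (by positivity), mul_comm]
  exact hcheb.trans hvar


variable {J : Ω → ℝ}

lemma nat_div_tendsto (C : ℝ) {ε : ℝ} (hε : 0 < ε) :
    Tendsto (fun n : ℕ => C / (ε ^ 2 * n)) atTop (nhds 0) := by
  have h := tendsto_const_div_atTop_nhds_zero_nat (C / ε ^ 2)
  refine h.congr fun n => ?_
  rw [div_div]

lemma QQ_tendsto_one (hY : Measurable Y) {c η : ℝ}
    (hη : 0 < η) (hlt : qq μ Y c < η) :
    Tendsto (fun n : ℕ => QQ μ Y (n - 1) ⌊η * n⌋₊ c) atTop (nhds 1) := by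
  set p := qq μ Y c with hp
  have hp0 : 0 ≤ p := qq_nonneg μ c
  set ε := η - p with hεdef
  have hε : 0 < ε := by simp [hεdef]; linarith
  have key : ∀ᶠ n : ℕ in atTop, 1 - 4 / (ε ^ 2 * n) ≤ QQ μ Y (n - 1) ⌊η * n⌋₊ c := by
    filter_upwards [eventually_ge_atTop (max 2 ⌈2 / ε⌉₊)] with n hn
    have hn2 : 2 ≤ n := le_trans (le_max_left _ _) hn
    have hnε : 2 / ε ≤ (n : ℝ) := by
      have h1 : ⌈2 / ε⌉₊ ≤ n := le_trans (le_max_right _ _) hn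
      exact le_trans (Nat.le_ceil _) (by exact_mod_cast h1)
    have hn1 : (1 : ℝ) ≤ n := by exact_mod_cast le_trans (by norm_num) hn2
    have hn0 : (0 : ℝ) < n := by linarith
    set π : Measure (Fin (n - 1) → Ω) := Measure.pi fun _ : Fin (n - 1) => μ with hπ
    haveI : IsProbabilityMeasure π := by rw [hπ]; infer_instance
    set k := ⌊η * n⌋₊ with hk
    set A : Set (Fin (n - 1) → Ω) :=
      {z | (Finset.univ.filter fun j => c < Y (z j)).card < k} with hA
    have hQQ : QQ μ Y (n - 1) k c = (π A).toReal := rfl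
    have hmcast : ((n - 1 : ℕ) : ℝ) = (n : ℝ) - 1 := by
      rw [Nat.cast_sub (by omega)]; norm_num
    have hkgt : η * n - 1 < (k : ℝ) := by
      have := Nat.lt_floor_add_one (η * n)
      rw [hk]; push_cast; linarith
    have hnε2 : 2 ≤ (n : ℝ) * ε := by
      rw [div_le_iff₀ hε] at hnε; linarith
    have ht : (0 : ℝ) < n * ε / 2 := by positivity
    have hsub : Aᶜ ⊆ {z : Fin (n - 1) → Ω | (n : ℝ) * ε / 2 ≤
        |((Finset.univ.filter fun j => c < Y (z j)).card : ℝ) - (n - 1 : ℕ) * p|} := by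
      intro z hz
      simp only [hA, mem_compl_iff, mem_setOf_eq, not_lt] at hz
      have hcnt : (k : ℝ) ≤ ((Finset.univ.filter fun j => c < Y (z j)).card : ℝ) := by
        exact_mod_cast hz
      have hmp : ((n - 1 : ℕ) : ℝ) * p ≤ (n : ℝ) * p := by
        rw [hmcast]; nlinarith
      have h2 : (n : ℝ) * ε / 2 ≤ ((Finset.univ.filter fun j => c < Y (z j)).card : ℝ)
          - (n - 1 : ℕ) * p := by
        have h3 := hnε2
        rw [hεdef] at h3
        rw [hmcast, hεdef]
        nlinarith [h3, hkgt, hcnt, hp0]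
      exact mem_setOf_eq ▸ le_trans h2 (le_abs_self _)
    have hbound : (π Aᶜ).toReal ≤ 4 / (ε ^ 2 * n) := by
      have h1 : (π Aᶜ).toReal ≤ ((n - 1 : ℕ) : ℝ) / ((n : ℝ) * ε / 2) ^ 2 := by
        refine le_trans (ENNReal.toReal_mono (measure_ne_top _ _) (measure_mono hsub)) ?_
        exact tail_bound μ hY c (n - 1) ht
      refine le_trans h1 ?_
      rw [div_le_div_iff₀ (by positivity) (by positivity), hmcast]
      nlinarith
    have hcompl : (π A).toReal + (π Aᶜ).toReal = 1 := by
      have h := measure_add_measure_compl (μ := π) (measurableSet_cntlt hY c k)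
      have h2 := congrArg ENNReal.toReal h
      rwa [ENNReal.toReal_add (measure_ne_top _ _) (measure_ne_top _ _), measure_univ,
        ENNReal.toReal_one] at h2
    rw [hQQ]; linarith
  have hup : ∀ᶠ n : ℕ in atTop, QQ μ Y (n - 1) ⌊η * n⌋₊ c ≤ 1 :=
    Eventually.of_forall fun n => QQ_le_one μ _ _ _
  have hlow : Tendsto (fun n : ℕ => 1 - 4 / (ε ^ 2 * n)) atTop (nhds 1) := by
    have := (tendsto_const_nhds (x := (1 : ℝ)) (f := atTop (α := ℕ))).sub
      (nat_div_tendsto 4 hε)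
    simpa using this
  exact tendsto_of_tendsto_of_tendsto_of_le_of_le' hlow tendsto_const_nhds key hup

lemma QQ_tendsto_zero (hY : Measurable Y) {c η : ℝ}
    (hη : 0 < η) (hgt : η < qq μ Y c) :
    Tendsto (fun n : ℕ => QQ μ Y (n - 1) ⌊η * n⌋₊ c) atTop (nhds 0) := by
  set p := qq μ Y c with hp
  have hp1 : p ≤ 1 := qq_le_one μ c
  set ε := p - η with hεdef
  have hε : 0 < ε := by simp [hεdef]; linarith
  have key : ∀ᶠ n : ℕ in atTop, QQ μ Y (n - 1) ⌊η * n⌋₊ c ≤ 4 / (ε ^ 2 * n) := by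
    filter_upwards [eventually_ge_atTop (max 2 ⌈2 / ε⌉₊)] with n hn
    have hn2 : 2 ≤ n := le_trans (le_max_left _ _) hn
    have hnε : 2 / ε ≤ (n : ℝ) := by
      have h1 : ⌈2 / ε⌉₊ ≤ n := le_trans (le_max_right _ _) hn
      exact le_trans (Nat.le_ceil _) (by exact_mod_cast h1)
    have hn1 : (1 : ℝ) ≤ n := by exact_mod_cast le_trans (by norm_num) hn2
    have hn0 : (0 : ℝ) < n := by linarith
    set π : Measure (Fin (n - 1) → Ω) := Measure.pi fun _ : Fin (n - 1) => μ with hπ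
    haveI : IsProbabilityMeasure π := by rw [hπ]; infer_instance
    set k := ⌊η * n⌋₊ with hk
    set A : Set (Fin (n - 1) → Ω) :=
      {z | (Finset.univ.filter fun j => c < Y (z j)).card < k} with hA
    have hQQ : QQ μ Y (n - 1) k c = (π A).toReal := rfl
    have hmcast : ((n - 1 : ℕ) : ℝ) = (n : ℝ) - 1 := by
      rw [Nat.cast_sub (by omega)]; norm_num
    have hkle : (k : ℝ) ≤ η * n := Nat.floor_le (by positivity)
    have hnε2 : 2 ≤ (n : ℝ) * ε := by
      rw [div_le_iff₀ hε] at hnε; linarith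
    have ht : (0 : ℝ) < n * ε / 2 := by positivity
    have hsub : A ⊆ {z : Fin (n - 1) → Ω | (n : ℝ) * ε / 2 ≤
        |((Finset.univ.filter fun j => c < Y (z j)).card : ℝ) - (n - 1 : ℕ) * p|} := by
      intro z hz
      simp only [hA, mem_setOf_eq] at hz
      have hcnt : ((Finset.univ.filter fun j => c < Y (z j)).card : ℝ) < (k : ℝ) := by
        exact_mod_cast hz
      have h2 : ((Finset.univ.filter fun j => c < Y (z j)).card : ℝ) - (n - 1 : ℕ) * p
          ≤ -((n : ℝ) * ε / 2) := by
        have h3 := hnε2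
        rw [hεdef] at h3
        rw [hmcast, hεdef]
        nlinarith [h3, hkle, hcnt, hp1]
      have : (n : ℝ) * ε / 2 ≤ -(((Finset.univ.filter fun j => c < Y (z j)).card : ℝ)
          - (n - 1 : ℕ) * p) := by linarith
      exact mem_setOf_eq ▸ le_trans this (neg_le_abs _)
    rw [hQQ]
    have h1 : (π A).toReal ≤ ((n - 1 : ℕ) : ℝ) / ((n : ℝ) * ε / 2) ^ 2 := by
      refine le_trans (ENNReal.toReal_mono (measure_ne_top _ _) (measure_mono hsub)) ?_
      exact tail_bound μ hY c (n - 1) ht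
    refine le_trans h1 ?_
    rw [div_le_div_iff₀ (by positivity) (by positivity), hmcast]
    nlinarith
  have hlo : ∀ᶠ n : ℕ in atTop, 0 ≤ QQ μ Y (n - 1) ⌊η * n⌋₊ c :=
    Eventually.of_forall fun n => QQ_nonneg μ _ _ _
  exact tendsto_of_tendsto_of_tendsto_of_le_of_le' tendsto_const_nhds
    (nat_div_tendsto 4 hε) hlo key


lemma measurable_gi (hY : Measurable Y) (hJ : Measurable J) {n k : ℕ} (i : Fin n) :
    Measurable fun x : Fin n → Ω =>
      (if (Finset.univ.filter fun l => Y (x i) < Y (x l)).card < k then J (x i) else 0) := by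
  have hcnt : Measurable fun x : Fin n → Ω =>
      (Finset.univ.filter fun l => Y (x i) < Y (x l)).card := by
    simp only [Finset.card_filter]
    exact Finset.measurable_sum _ fun l _ => Measurable.ite
      (measurableSet_lt (hY.comp (measurable_pi_apply i)) (hY.comp (measurable_pi_apply l)))
      measurable_const measurable_const
  exact Measurable.ite (measurableSet_lt hcnt measurable_const)
    (hJ.comp (measurable_pi_apply i)) measurable_const

lemma integrable_gi (hY : Measurable Y) (hJ : Measurable J) {C : ℝ} (hC : ∀ a, |J a| ≤ C)
    {n k : ℕ} (i : Fin n) :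
    Integrable (fun x : Fin n → Ω =>
      (if (Finset.univ.filter fun l => Y (x i) < Y (x l)).card < k then J (x i) else 0))
      (Measure.pi fun _ : Fin n => μ) := by
  refine integrable_of_bound _ (measurable_gi hY hJ i) |C| fun x => ?_
  split_ifs
  · exact le_trans (hC _) (le_abs_self _)
  · simp [abs_nonneg]

lemma step_symm (hY : Measurable Y) (hJ : Measurable J) {m k : ℕ} (i : Fin (m + 1)) :
    ∫ x : Fin (m + 1) → Ω,
        (if (Finset.univ.filter fun l => Y (x i) < Y (x l)).card < k then J (x i) else 0)
        ∂(Measure.pi fun _ : Fin (m + 1) => μ)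
      = ∫ x : Fin (m + 1) → Ω,
        (if (Finset.univ.filter fun l => Y (x 0) < Y (x l)).card < k then J (x 0) else 0)
        ∂(Measure.pi fun _ : Fin (m + 1) => μ) := by
  classical
  set e := Equiv.swap i (0 : Fin (m + 1)) with he
  set T := MeasurableEquiv.piCongrLeft (fun _ : Fin (m + 1) => Ω) e with hTdef
  have hmp : MeasurePreserving T (Measure.pi fun _ : Fin (m + 1) => μ)
      (Measure.pi fun _ : Fin (m + 1) => μ) :=
    measurePreserving_piCongrLeft (fun _ : Fin (m + 1) => μ) e
  have hT : ∀ (x : Fin (m + 1) → Ω) (l : Fin (m + 1)), T x l = x (e l) := by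
    intro x l
    have h1 : (MeasurableEquiv.piCongrLeft (fun _ : Fin (m + 1) => Ω) e) x (e (e.symm l))
        = x (e.symm l) :=
      MeasurableEquiv.piCongrLeft_apply_apply (β := fun _ : Fin (m + 1) => Ω) e x (e.symm l)
    rw [Equiv.apply_symm_apply] at h1
    rw [hTdef, h1, he, Equiv.symm_swap]
  have hcard : ∀ (P : Fin (m + 1) → Prop) [DecidablePred P],
      (Finset.univ.filter fun l => P (e l)).card = (Finset.univ.filter P).card := by
    intro P _
    refine Finset.card_equiv e fun l => ?_
    simp
  calc ∫ x : Fin (m + 1) → Ω,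
        (if (Finset.univ.filter fun l => Y (x i) < Y (x l)).card < k then J (x i) else 0)
        ∂(Measure.pi fun _ : Fin (m + 1) => μ)
      = ∫ x : Fin (m + 1) → Ω,
        (if (Finset.univ.filter fun l => Y (T x i) < Y (T x l)).card < k then J (T x i) else 0)
        ∂(Measure.pi fun _ : Fin (m + 1) => μ) := by
        rw [hmp.integral_comp' (fun x => if (Finset.univ.filter
          fun l => Y (x i) < Y (x l)).card < k then J (x i) else 0)]
    _ = _ := by
        refine integral_congr_ae (ae_of_all _ fun x => ?_)
        simp only [hT, he, Equiv.swap_apply_left]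
        rw [hcard fun l => Y (x 0) < Y (x l)]

lemma step_fubini (hY : Measurable Y) (hJ : Measurable J) {C : ℝ} (hC : ∀ a, |J a| ≤ C)
    {m k : ℕ} :
    ∫ x : Fin (m + 1) → Ω,
        (if (Finset.univ.filter fun l => Y (x 0) < Y (x l)).card < k then J (x 0) else 0)
        ∂(Measure.pi fun _ : Fin (m + 1) => μ)
      = ∫ a, J a * QQ μ Y m k (Y a) ∂μ := by
  classical
  set T := MeasurableEquiv.piFinSuccAbove (fun _ : Fin (m + 1) => Ω) 0 with hTdef
  have hmp : MeasurePreserving T.symm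
      (μ.prod (Measure.pi fun _ : Fin m => μ)) (Measure.pi fun _ : Fin (m + 1) => μ) :=
    (measurePreserving_piFinSuccAbove (fun _ : Fin (m + 1) => μ) 0).symm
  rw [← hmp.integral_comp' (fun x => if (Finset.univ.filter
      fun l => Y (x 0) < Y (x l)).card < k then J (x 0) else 0)]
  have hpt : ∀ p : Ω × (Fin m → Ω),
      (if (Finset.univ.filter fun l => Y (T.symm p 0) < Y (T.symm p l)).card < k
        then J (T.symm p 0) else 0)
      = (if (Finset.univ.filter fun j => Y p.1 < Y (p.2 j)).card < k then J p.1 else 0) := by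
    intro p
    have hs : T.symm p = Fin.cons p.1 p.2 := by
      rw [hTdef]
      simp only [MeasurableEquiv.piFinSuccAbove_symm_apply]
      simp [Fin.insertNthEquiv, Fin.insertNth_zero']
    rw [hs, Fin.cons_zero]
    congr 2
    rw [Finset.card_filter, Finset.card_filter, Fin.sum_univ_succ, Fin.cons_zero]
    simp only [Fin.cons_succ, lt_self_iff_false, if_false, zero_add]
  simp only [hpt]
  have hmeas : Measurable fun p : Ω × (Fin m → Ω) =>
      (if (Finset.univ.filter fun j => Y p.1 < Y (p.2 j)).card < k then J p.1 else 0) := by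
    have hcnt : Measurable fun p : Ω × (Fin m → Ω) =>
        (Finset.univ.filter fun j => Y p.1 < Y (p.2 j)).card := by
      simp only [Finset.card_filter]
      exact Finset.measurable_sum _ fun j _ => Measurable.ite
        (measurableSet_lt (hY.comp measurable_fst)
          (hY.comp ((measurable_pi_apply j).comp measurable_snd)))
        measurable_const measurable_const
    exact Measurable.ite (measurableSet_lt hcnt measurable_const)
      (hJ.comp measurable_fst) measurable_const
  have hint : Integrable (fun p : Ω × (Fin m → Ω) =>
      (if (Finset.univ.filter fun j => Y p.1 < Y (p.2 j)).card < k then J p.1 else 0))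
      (μ.prod (Measure.pi fun _ : Fin m => μ)) := by
    refine ⟨hmeas.aestronglyMeasurable, HasFiniteIntegral.of_bounded (C := |C|)
      (ae_of_all _ fun p => ?_)⟩
    rw [Real.norm_eq_abs]
    split_ifs
    · exact le_trans (hC _) (le_abs_self _)
    · simp [abs_nonneg]
  rw [integral_prod _ hint]
  refine integral_congr_ae (ae_of_all _ fun a => ?_)
  show (∫ z : Fin m → Ω,
      (if (Finset.univ.filter fun j => Y a < Y (z j)).card < k then J a else 0)
      ∂(Measure.pi fun _ : Fin m => μ)) = J a * QQ μ Y m k (Y a)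
  have h1 : (fun z : Fin m → Ω =>
      (if (Finset.univ.filter fun j => Y a < Y (z j)).card < k then J a else 0))
      = Set.indicator {z : Fin m → Ω |
          (Finset.univ.filter fun j => Y a < Y (z j)).card < k} (fun _ => J a) := by
    funext z; simp [Set.indicator_apply]
  rw [h1, integral_indicator_const (J a) (measurableSet_cntlt hY (Y a) k)]
  rw [QQ, smul_eq_mul, mul_comm]; rfl

lemma step_total (hY : Measurable Y) (hJ : Measurable J) {C : ℝ} (hC : ∀ a, |J a| ≤ C)
    (m k : ℕ) :
    ∫ x : Fin (m + 1) → Ω, topQuantileAvg Y J k x ∂(Measure.pi fun _ : Fin (m + 1) => μ)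
      = (k : ℝ)⁻¹ * (m + 1) * ∫ a, J a * QQ μ Y m k (Y a) ∂μ := by
  unfold topQuantileAvg
  rw [integral_const_mul, integral_finset_sum _ fun i _ => integrable_gi μ hY hJ hC i]
  have h1 : ∀ i : Fin (m + 1),
      (∫ x : Fin (m + 1) → Ω,
        (if (Finset.univ.filter fun l => Y (x i) < Y (x l)).card < k then J (x i) else 0)
        ∂(Measure.pi fun _ : Fin (m + 1) => μ))
      = ∫ a, J a * QQ μ Y m k (Y a) ∂μ := fun i => by
    rw [step_symm μ hY hJ i, step_fubini μ hY hJ hC]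
  simp only [h1, Finset.sum_const, Finset.card_univ, Fintype.card_fin, nsmul_eq_mul]
  push_cast
  ring


end RetaAux

open RetaAux

/-- Let `μ` be a probability measure on `Ω`, `Y : Ω → ℝ` measurable with
atomless law (continuous CDF `F`), and `J : Ω → ℝ` bounded and measurable. Let `η ∈ (0,1)` be a
continuity point of the upper quantile function `Θ η = inf {x : F x ≥ 1 - η}`, and assume `F` is
continuous at `Θ η`. For i.i.d. samples `ω_1, …, ω_n ∼ μ` (modeled by the product measure on
`Fin n → Ω`), let `T_n` be the average of `J` over the `⌊ηn⌋` samples with the largest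
`Y`-values. Then `lim_{n→∞} E[T_n] = E[J | Y ≥ Θ η]` (the expectation of `J` under the
conditional measure given the event `{Y ≥ Θ η}`). -/
theorem reta_limit_eq_condExp
    {Ω : Type*} [MeasurableSpace Ω] (μ : Measure Ω) [IsProbabilityMeasure μ]
    (Y : Ω → ℝ) (hY : Measurable Y)
    (hatomless : ∀ c : ℝ, μ {ω | Y ω = c} = 0)
    (J : Ω → ℝ) (hJmeas : Measurable J) (hJbdd : ∃ C : ℝ, ∀ ω, |J ω| ≤ C)
    (F : ℝ → ℝ) (hF : ∀ x, F x = (μ {ω | Y ω ≤ x}).toReal)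
    (Θ : ℝ → ℝ) (hΘ : ∀ t, Θ t = sInf {x : ℝ | 1 - t ≤ F x})
    (η : ℝ) (hη : η ∈ Set.Ioo (0 : ℝ) 1)
    (hcontΘ : ContinuousAt Θ η) (hcontF : ContinuousAt F (Θ η)) :
    Tendsto
      (fun n => ∫ x : Fin n → Ω, topQuantileAvg Y J ⌊η * n⌋₊ x
        ∂(Measure.pi fun _ : Fin n => μ))
      atTop
      (nhds (∫ ω, J ω ∂(ProbabilityTheory.cond μ {ω | Θ η ≤ Y ω}))) := by
  obtain ⟨C, hC⟩ := hJbdd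
  obtain ⟨hη0, hη1⟩ := hη
  set r : ℝ := 1 - η with hrdef
  have hr0 : 0 < r := by simp [hrdef]; linarith
  have hr1 : r < 1 := by simp [hrdef]; linarith
  -- basic facts about F
  have hFle1 : ∀ x, F x ≤ 1 := by
    intro x
    rw [hF x]
    have := ENNReal.toReal_mono ENNReal.one_ne_top
      (prob_le_one (μ := μ) (s := {ω | Y ω ≤ x}))
    simpa using this
  have hFmono : Monotone F := by
    intro a b hab
    rw [hF a, hF b]
    exact ENNReal.toReal_mono (measure_ne_top _ _)
      (measure_mono (setOf_subset_setOf.2 fun ω h => le_trans h hab))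
  have hμF : ∀ x, μ {ω | Y ω ≤ x} = ENNReal.ofReal (F x) := by
    intro x
    rw [hF x, ENNReal.ofReal_toReal (measure_ne_top _ _)]
  have hlt_le : ∀ c : ℝ, μ {ω | Y ω < c} = μ {ω | Y ω ≤ c} := by
    intro c
    have hdecomp : {ω | Y ω ≤ c} = {ω | Y ω < c} ∪ {ω | Y ω = c} := by
      ext ω; simp [le_iff_lt_or_eq]
    refine le_antisymm (measure_mono (setOf_subset_setOf.2 fun ω h => le_of_lt h)) ?_
    rw [hdecomp]
    refine le_trans (measure_union_le _ _) ?_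
    rw [hatomless c, add_zero]
  -- tendsto of F at infinity
  have hFtop : Tendsto F atTop (nhds 1) := by
    have h1 : Tendsto (fun x : ℝ => μ {ω | Y ω ≤ x}) atTop (nhds (μ univ)) := by
      have := tendsto_measure_iUnion_atTop (μ := μ)
        (s := fun x : ℝ => {ω | Y ω ≤ x}) (fun a b hab => setOf_subset_setOf.2 fun ω h => le_trans h hab)
      rwa [show ⋃ x : ℝ, {ω | Y ω ≤ x} = univ from
        eq_univ_of_forall fun ω => mem_iUnion.2 ⟨Y ω, show Y ω ≤ Y ω from le_rfl⟩] at this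
    have h2 := (ENNReal.tendsto_toReal (a := μ univ) (measure_ne_top _ _)).comp h1
    simp only [measure_univ, ENNReal.toReal_one] at h2
    refine h2.congr fun x => ?_
    simp [Function.comp, hF x]
  have hFbot : Tendsto F atBot (nhds 0) := by
    have h1 : Tendsto (fun x : ℝ => μ {ω | Y ω ≤ x}) atBot (nhds (μ (⋂ x : ℝ, {ω | Y ω ≤ x}))) := by
      exact tendsto_measure_iInter_atBot
        (fun x => (hY measurableSet_Iic).nullMeasurableSet)
        (fun a b hab => setOf_subset_setOf.2 fun ω h => le_trans h hab) ⟨0, measure_ne_top _ _⟩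
    have hempty : ⋂ x : ℝ, {ω | Y ω ≤ x} = ∅ := by
      ext ω
      simp only [mem_iInter, mem_setOf_eq, mem_empty_iff_false, iff_false, not_forall]
      exact ⟨Y ω - 1, by push_neg; linarith⟩
    rw [hempty, measure_empty] at h1
    have h2 := (ENNReal.tendsto_toReal (a := 0) (by simp)).comp h1
    simp only [ENNReal.toReal_zero] at h2
    refine h2.congr fun x => ?_
    simp [Function.comp, hF x]
  -- the quantile set
  set S : Set ℝ := {x : ℝ | r ≤ F x} with hSdef
  obtain ⟨x₀, hx₀⟩ : ∃ x₀, r < F x₀ :=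
    ((hFtop.eventually (eventually_gt_nhds hr1)).exists)
  obtain ⟨x₁, hx₁⟩ : ∃ x₁, F x₁ < r :=
    ((hFbot.eventually (eventually_lt_nhds hr0)).exists)
  have hSne : S.Nonempty := ⟨x₀, le_of_lt hx₀⟩
  have hSbdd : BddBelow S := by
    refine ⟨x₁, fun y hy => ?_⟩
    by_contra hxy
    push_neg at hxy
    exact absurd (le_trans hy (hFmono (le_of_lt hxy))) (not_le.2 hx₁)
  have hTdef : Θ η = sInf S := by rw [hSdef, hrdef, hΘ η]
  set T : ℝ := Θ η with hT
  -- F T = r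
  have hub : ∀ x, T < x → r ≤ F x := by
    intro x hx
    rw [hTdef] at hx
    obtain ⟨s, hs, hsx⟩ := (csInf_lt_iff hSbdd hSne).1 hx
    exact le_trans hs (hFmono (le_of_lt hsx))
  have hlb : ∀ x, x < T → F x ≤ r := by
    intro x hx
    by_contra h
    push_neg at h
    have : x ∈ S := le_of_lt h
    have := csInf_le hSbdd this
    rw [← hTdef] at this
    linarith
  have hFT : F T = r := by
    have hge : r ≤ F T := by
      have h1 : Tendsto F (nhdsWithin T (Ioi T)) (nhds (F T)) :=
        hcontF.continuousWithinAt
      exact ge_of_tendsto h1 (eventually_nhdsWithin_of_forall fun x hx => hub x hx)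
    have hle : F T ≤ r := by
      have h1 : Tendsto F (nhdsWithin T (Iio T)) (nhds (F T)) :=
        hcontF.continuousWithinAt
      exact le_of_tendsto h1 (eventually_nhdsWithin_of_forall fun x hx => hlb x hx)
    linarith
  -- measures of quantile events
  have hμleT : μ {ω | Y ω ≤ T} = ENNReal.ofReal r := by rw [hμF, hFT]
  have hμltT : μ {ω | Y ω < T} = ENNReal.ofReal r := by rw [hlt_le, hμleT]
  have hμgeT : μ {ω | T ≤ Y ω} = ENNReal.ofReal η := by
    have hcompl : {ω | T ≤ Y ω} = {ω | Y ω < T}ᶜ := by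
      ext ω; simp [not_lt]
    have hmlt : MeasurableSet {ω | Y ω < T} := hY measurableSet_Iio
    rw [hcompl, measure_compl hmlt (measure_ne_top _ _), measure_univ, hμltT]
    rw [show (η : ℝ) = 1 - r by rw [hrdef]; ring, ENNReal.ofReal_sub 1 (le_of_lt hr0)]
    simp
  -- the null set
  have hN : μ {ω | F (Y ω) = r} = 0 := by
    by_cases hIe : {x : ℝ | F x = r}.Nonempty
    · have hIbdd : BddAbove {x : ℝ | F x = r} := by
        refine ⟨x₀, fun x hx => ?_⟩
        by_contra hxx
        push_neg at hxx
        have := hFmono (le_of_lt hxx)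
        rw [hx] at this
        linarith
      set b : ℝ := sSup {x : ℝ | F x = r} with hb
      have hTmem : ∀ x ∈ {x : ℝ | F x = r}, T ≤ x := by
        intro x hx
        rw [hTdef]
        exact csInf_le hSbdd (le_of_eq hx.symm)
      have hTb : T ≤ b := by
        obtain ⟨x, hx⟩ := hIe
        exact le_trans (hTmem x hx) (le_csSup hIbdd hx)
      have hFlt : ∀ y, y < b → F y ≤ r := by
        intro y hy
        obtain ⟨x, hx, hyx⟩ := exists_lt_of_lt_csSup hIe hy
        rw [← hx]
        exact hFmono (le_of_lt hyx)
      have hμltb : μ {ω | Y ω < b} ≤ ENNReal.ofReal r := by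
        have hcover : {ω | Y ω < b} = ⋃ n : ℕ, {ω | Y ω ≤ b - 1 / (n + 1)} := by
          ext ω
          simp only [mem_setOf_eq, mem_iUnion]
          constructor
          · intro h
            obtain ⟨n, hn⟩ := exists_nat_one_div_lt (show 0 < b - Y ω by linarith)
            exact ⟨n, by linarith⟩
          · intro ⟨n, hn⟩
            have : (0 : ℝ) < 1 / (n + 1) := by positivity
            linarith
        rw [hcover, Directed.measure_iUnion ?_]
        · refine iSup_le fun n => ?_
          have h1 : (0 : ℝ) < 1 / (n + 1) := by positivity
          rw [hμF]
          exact ENNReal.ofReal_le_ofReal (hFlt _ (by linarith))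
        · refine Monotone.directed_le fun p q hpq => setOf_subset_setOf.2 fun ω h => ?_
          have hinv : (1 : ℝ) / (q + 1) ≤ 1 / (p + 1) := by
            apply one_div_le_one_div_of_le
            · positivity
            · exact_mod_cast Nat.add_le_add_right hpq 1
          linarith
      have hsub : {ω | F (Y ω) = r} ⊆ {ω | Y ω ≤ b} \ {ω | Y ω < T} := by
        intro ω hω
        constructor
        · exact le_csSup hIbdd hω
        · simp only [mem_setOf_eq, not_lt]
          exact hTmem _ hω
      refine le_antisymm (le_trans (measure_mono hsub) ?_) zero_le
      have hmlt : MeasurableSet {ω | Y ω < T} := hY measurableSet_Iio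
      have hdiff : μ ({ω | Y ω ≤ b} \ {ω | Y ω < T})
          = μ {ω | Y ω ≤ b} - μ {ω | Y ω < T} :=
        measure_sdiff (setOf_subset_setOf.2 fun ω h => le_of_lt (lt_of_lt_of_le h hTb))
          hmlt.nullMeasurableSet (measure_ne_top _ _)
      rw [hdiff, hμltT]
      have h1 : μ {ω | Y ω ≤ b} ≤ ENNReal.ofReal r := by rw [← hlt_le]; exact hμltb
      exact le_trans (tsub_le_tsub h1 le_rfl) (by simp)
    · rw [show {ω | F (Y ω) = r} = ∅ from
        eq_empty_of_forall_notMem fun ω h => hIe ⟨Y ω, h⟩]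
      exact measure_empty
  -- qq in terms of F
  have hqF : ∀ c, qq μ Y c = 1 - F c := by
    intro c
    have hcompl : {a | c < Y a} = {a | Y a ≤ c}ᶜ := by ext a; simp [not_le]
    have hmle : MeasurableSet {a | Y a ≤ c} := hY measurableSet_Iic
    rw [qq, hcompl, measure_compl hmle (measure_ne_top _ _), measure_univ,
      ENNReal.toReal_sub_of_le (prob_le_one) ENNReal.one_ne_top, ENNReal.toReal_one, hF c]
  -- the limit of the inner integrals
  set g : Ω → ℝ := Set.indicator {ω | T ≤ Y ω} J with hg
  have hB : Tendsto (fun n : ℕ => ∫ a, J a * QQ μ Y (n - 1) ⌊η * n⌋₊ (Y a) ∂μ)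
      atTop (nhds (∫ a, g a ∂μ)) := by
    refine tendsto_integral_of_dominated_convergence (fun _ => |C|)
      (fun n => (hJmeas.mul (((QQ_mono μ (n - 1) ⌊η * n⌋₊ hY).measurable).comp
        hY)).aestronglyMeasurable)
      (integrable_const _) (fun n => ae_of_all _ fun a => ?_) ?_
    · rw [Real.norm_eq_abs, abs_mul]
      calc |J a| * |QQ μ Y (n - 1) ⌊η * n⌋₊ (Y a)| ≤ |C| * 1 := by
            refine mul_le_mul (le_trans (hC a) (le_abs_self C)) ?_ (abs_nonneg _) (abs_nonneg _)
            rw [abs_of_nonneg (QQ_nonneg μ _ _ _)]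
            exact QQ_le_one μ _ _ _
        _ = |C| := mul_one _
    · have hae : ∀ᵐ ω ∂μ, F (Y ω) ≠ r := by
        rw [ae_iff]
        simpa [not_not] using hN
      filter_upwards [hae] with ω hω
      rcases lt_or_gt_of_ne hω with hlt | hgt
      · -- F (Y ω) < r : below the quantile, QQ → 0
        have hq : η < qq μ Y (Y ω) := by rw [hqF]; simp [hrdef] at hlt ⊢; linarith
        have hYT : ¬ T ≤ Y ω := by
          intro h
          have := hFmono h
          rw [hFT] at this
          linarith
        have hg0 : g ω = 0 := Set.indicator_of_notMem (s := {ω | T ≤ Y ω}) hYT J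
        rw [hg0]
        have := (QQ_tendsto_zero μ hY hη0 hq).const_mul (J ω)
        simpa using this
      · -- r < F (Y ω) : above the quantile, QQ → 1
        have hq : qq μ Y (Y ω) < η := by rw [hqF]; simp [hrdef] at hgt ⊢; linarith
        have hYT : T ≤ Y ω := by
          rw [hTdef]
          exact csInf_le hSbdd (le_of_lt hgt)
        have hg1 : g ω = J ω := Set.indicator_of_mem (s := {ω | T ≤ Y ω}) hYT J
        rw [hg1]
        have := (QQ_tendsto_one μ hY hη0 hq).const_mul (J ω)
        simpa using this
  -- the coefficient
  have hA : Tendsto (fun n : ℕ => ((⌊η * n⌋₊ : ℝ))⁻¹ * n) atTop (nhds η⁻¹) := by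
    have h1 := tendsto_nat_floor_mul_div_atTop (R := ℝ) (le_of_lt hη0)
    have h2 : Tendsto (fun n : ℕ => ((⌊η * n⌋₊ : ℝ) / n)) atTop (nhds η) :=
      h1.comp tendsto_natCast_atTop_atTop
    have h3 := h2.inv₀ (ne_of_gt hη0)
    refine h3.congr fun n => ?_
    rw [inv_div, div_eq_mul_inv, mul_comm]
  -- eventual identification of the integrals
  have heq : ∀ᶠ n : ℕ in atTop,
      (((⌊η * n⌋₊ : ℝ))⁻¹ * n) * ∫ a, J a * QQ μ Y (n - 1) ⌊η * n⌋₊ (Y a) ∂μ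
        = ∫ x : Fin n → Ω, topQuantileAvg Y J ⌊η * n⌋₊ x
            ∂(Measure.pi fun _ : Fin n => μ) := by
    filter_upwards [eventually_ge_atTop 1] with n hn
    obtain ⟨m, rfl⟩ : ∃ m, n = m + 1 := ⟨n - 1, by omega⟩
    rw [step_total μ hY hJmeas hC m ⌊η * (m + 1 : ℕ)⌋₊]
    simp only [Nat.add_sub_cancel]
    push_cast
    ring
  -- value of the conditional integral
  have hmT : MeasurableSet {ω | T ≤ Y ω} := hY measurableSet_Ici
  have hval : ∫ ω, J ω ∂(ProbabilityTheory.cond μ {ω | T ≤ Y ω}) = η⁻¹ * ∫ a, g a ∂μ := by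
    rw [ProbabilityTheory.cond, integral_smul_measure, hμgeT,
      ENNReal.toReal_inv, ENNReal.toReal_ofReal (le_of_lt hη0), smul_eq_mul]
    congr 1
    rw [hg, integral_indicator hmT]
  rw [show {ω | Θ η ≤ Y ω} = {ω | T ≤ Y ω} from by rw [hT], hval]
  exact Tendsto.congr' heq (hA.mul hB)
end

section
/- Let (Ω, μ) be a probability space, Y : Ω → ℝ measurable with atomless law (continuous CDF F), and J : Ω → ℝ bounded and measurable. Let η ∈ (0,1) be a continuity point of the upper quantile function Θ(η) = inf{x ∈ ℝ : F(x) ≥ 1 − η}. For n with ⌊ηn⌋ ≥ 1 and i.i.d. samples ω_1,…,ω_n ∼ μ, let T_n = (1/⌊ηn⌋) Σ_{j=1}^{⌊ηn⌋} J(ω_{(j)}), where ω_{(j)} is the sample with the j-th largest Y-value (almost surely unique). Then lim_{n→∞} E[T_n] = (1/η) · E[J · 1{Y ≥ Θ(η)}]. -/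
open MeasureTheory Filter Set

set_option linter.unusedSectionVars false
set_option linter.deprecated false
set_option maxHeartbeats 1000000

namespace RetaProof

section Aux
variable {Ω : Type*} [MeasurableSpace Ω] (μ : Measure Ω) [IsProbabilityMeasure μ] {Y : Ω → ℝ}

noncomputable def bfun (Y : Ω → ℝ) (c : ℝ) (x : Ω) : ℝ := if c < Y x then 1 else 0
noncomputable def Sfun (Y : Ω → ℝ) (c : ℝ) {m : ℕ} (y : Fin m → Ω) : ℝ := ∑ l, bfun Y c (y l)
noncomputable def prY (Y : Ω → ℝ) (c : ℝ) : ℝ := (μ {x | c < Y x}).toReal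
noncomputable def Bfun (Y : Ω → ℝ) (m k : ℕ) (c : ℝ) : ℝ :=
  ((Measure.pi fun _ : Fin m => μ) {y | Sfun Y c y < k}).toReal


lemma bfun_measurable (hY : Measurable Y) (c : ℝ) : Measurable (bfun Y c) :=
  Measurable.ite (measurableSet_lt measurable_const hY) measurable_const measurable_const

lemma bfun_nonneg (c : ℝ) (x : Ω) : 0 ≤ bfun Y c x := by
  unfold bfun; split <;> norm_num

lemma bfun_le_one (c : ℝ) (x : Ω) : bfun Y c x ≤ 1 := by
  unfold bfun; split <;> norm_num

lemma integral_bfun (hY : Measurable Y) (c : ℝ) : ∫ x, bfun Y c x ∂μ = prY μ Y c := by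
  have : bfun Y c = Set.indicator {x | c < Y x} (fun _ => (1:ℝ)) := by
    funext x; simp [bfun, Set.indicator_apply, mem_setOf_eq]
  rw [this, integral_indicator_const _ (measurableSet_lt measurable_const hY)]
  simp [prY]
  rfl

lemma prY_nonneg (c : ℝ) : 0 ≤ prY μ Y c := ENNReal.toReal_nonneg

lemma prY_le_one (c : ℝ) : prY μ Y c ≤ 1 := by
  have := prob_le_one (μ := μ) (s := {x | c < Y x})
  simpa [prY] using ENNReal.toReal_mono ENNReal.one_ne_top this

lemma prY_measurable (hY : Measurable Y) : Measurable (prY μ Y) := by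
  have hE : MeasurableSet {z : ℝ × Ω | z.1 < Y z.2} :=
    measurableSet_lt measurable_fst (hY.comp measurable_snd)
  exact (measurable_measure_prodMk_left hE).ennreal_toReal

lemma Sfun_measurable (hY : Measurable Y) {m : ℕ} (c : ℝ) :
    Measurable fun y : Fin m → Ω => Sfun Y c y := by
  unfold Sfun
  exact Finset.measurable_sum _ fun l _ => (bfun_measurable hY c).comp (measurable_pi_apply l)

lemma measurableSet_Slt (hY : Measurable Y) {m : ℕ} (c : ℝ) (k : ℕ) :
    MeasurableSet {y : Fin m → Ω | Sfun Y c y < k} :=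
  measurableSet_lt (Sfun_measurable hY c) measurable_const

lemma Sfun_nonneg (c : ℝ) {m : ℕ} (y : Fin m → Ω) : 0 ≤ Sfun Y c y :=
  Finset.sum_nonneg fun l _ => bfun_nonneg c (y l)

lemma Sfun_le (c : ℝ) {m : ℕ} (y : Fin m → Ω) : Sfun Y c y ≤ m := by
  calc Sfun Y c y ≤ ∑ _l : Fin m, (1:ℝ) :=
        Finset.sum_le_sum fun l _ => bfun_le_one c (y l)
    _ = m := by simp

lemma card_lt_iff_Sfun (c : ℝ) {m : ℕ} (y : Fin m → Ω) (k : ℕ) :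
    (Finset.univ.filter fun l => c < Y (y l)).card < k ↔ Sfun Y c y < k := by
  have h : ((Finset.univ.filter fun l => c < Y (y l)).card : ℝ) = Sfun Y c y := by
    rw [Finset.card_filter]
    push_cast
    simp [Sfun, bfun]
  rw [← Nat.cast_lt (α := ℝ), h]

lemma integral_eval {m : ℕ} (j : Fin m) (f : Ω → ℝ) :
    ∫ y : Fin m → Ω, f (y j) ∂(Measure.pi fun _ => μ) = ∫ x, f x ∂μ := by
  letI : MeasureSpace Ω := ⟨μ⟩
  have hvol : (Measure.pi fun _ : Fin m => μ) = (volume : Measure (Fin m → Ω)) :=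
    (volume_pi).symm
  classical
  set g : Fin m → Ω → ℝ := fun i => if i = j then f else fun _ => (1:ℝ) with hg
  have h1 : ∀ y : Fin m → Ω, f (y j) = ∏ i, g i (y i) := by
    intro y
    rw [Fintype.prod_eq_single j (fun b hb => by simp [hg, hb])]
    simp [hg]
  calc ∫ y : Fin m → Ω, f (y j) ∂(Measure.pi fun _ => μ)
      = ∫ y : Fin m → Ω, ∏ i, g i (y i) := by
        rw [hvol]; exact integral_congr_ae (Filter.Eventually.of_forall fun y => h1 y)
    _ = ∏ i, ∫ x, g i x := MeasureTheory.integral_fintype_prod_eq_prod (ι := Fin m) g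
    _ = ∫ x, f x ∂μ := by
        rw [Fintype.prod_eq_single j (fun b hb => by simp [hg, hb])]
        simp only [hg, if_pos rfl]
        rfl

lemma integral_eval_mul {m : ℕ} {j j' : Fin m} (hjj' : j ≠ j') (f f' : Ω → ℝ) :
    ∫ y : Fin m → Ω, f (y j) * f' (y j') ∂(Measure.pi fun _ => μ)
      = (∫ x, f x ∂μ) * ∫ x, f' x ∂μ := by
  letI : MeasureSpace Ω := ⟨μ⟩
  have hvol : (Measure.pi fun _ : Fin m => μ) = (volume : Measure (Fin m → Ω)) :=
    (volume_pi).symm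
  classical
  set g : Fin m → Ω → ℝ := fun i => if i = j then f else if i = j' then f' else fun _ => (1:ℝ)
    with hg
  have h1 : ∀ y : Fin m → Ω, f (y j) * f' (y j') = ∏ i, g i (y i) := by
    intro y
    rw [Fintype.prod_eq_mul j j' hjj' (fun b hb => by simp [hg, hb.1, hb.2])]
    simp [hg, hjj', hjj'.symm]
  calc ∫ y : Fin m → Ω, f (y j) * f' (y j') ∂(Measure.pi fun _ => μ)
      = ∫ y : Fin m → Ω, ∏ i, g i (y i) := by
        rw [hvol]; exact integral_congr_ae (Filter.Eventually.of_forall fun y => h1 y)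
    _ = ∏ i, ∫ x, g i x := MeasureTheory.integral_fintype_prod_eq_prod (ι := Fin m) g
    _ = (∫ x, f x ∂μ) * ∫ x, f' x ∂μ := by
        rw [Fintype.prod_eq_mul j j' hjj' (fun b hb => by simp [hg, hb.1, hb.2])]
        simp only [hg, if_pos rfl, if_neg hjj', if_neg hjj'.symm]
        rfl

-- variance bound
lemma integral_sq_dev_le (hY : Measurable Y) (c : ℝ) (m : ℕ) :
    ∫ y : Fin m → Ω, (Sfun Y c y - m * prY μ Y c) ^ 2 ∂(Measure.pi fun _ => μ) ≤ m := by
  classical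
  set p := prY μ Y c with hp
  set u : Ω → ℝ := fun x => bfun Y c x - p with hu
  have hum : Measurable u := (bfun_measurable hY c).sub measurable_const
  have hu1 : ∀ x, |u x| ≤ 1 := by
    intro x
    have h0 := bfun_nonneg (Y := Y) c x
    have h1 := bfun_le_one (Y := Y) c x
    have hp0 := prY_nonneg μ (Y := Y) c
    have hp1 := prY_le_one μ (Y := Y) c
    rw [abs_le]; constructor <;> simp only [hu] <;> nlinarith
  have huint : Integrable u μ :=
    Integrable.mono' (integrable_const 1) hum.aestronglyMeasurable
      (Filter.Eventually.of_forall hu1)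
  have huzero : ∫ x, u x ∂μ = 0 := by
    rw [hu]
    rw [integral_sub (by
      exact Integrable.mono' (integrable_const 1) (bfun_measurable hY c).aestronglyMeasurable
        (Filter.Eventually.of_forall fun x => by
          rw [Real.norm_eq_abs, abs_le]
          exact ⟨by linarith [bfun_nonneg (Y := Y) c x],
            bfun_le_one (Y := Y) c x⟩)) (integrable_const p)]
    rw [integral_bfun μ hY c, integral_const]
    simp [hp]
  have hdev : ∀ y : Fin m → Ω, Sfun Y c y - m * p = ∑ l, u (y l) := by
    intro y
    simp only [hu, Finset.sum_sub_distrib, Finset.sum_const, Finset.card_univ,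
      Fintype.card_fin, nsmul_eq_mul, Sfun]
  have hsq : ∀ y : Fin m → Ω, (Sfun Y c y - m * p) ^ 2 = ∑ l, ∑ l', u (y l) * u (y l') := by
    intro y
    rw [hdev y, sq, Finset.sum_mul_sum]
  have hterm_int : ∀ l l' : Fin m, Integrable (fun y : Fin m → Ω => u (y l) * u (y l'))
      (Measure.pi fun _ => μ) := by
    intro l l'
    refine Integrable.mono' (integrable_const 1)
      (((hum.comp (measurable_pi_apply l)).mul (hum.comp (measurable_pi_apply l'))).aestronglyMeasurable)
      (Filter.Eventually.of_forall fun y => ?_)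
    rw [Real.norm_eq_abs, abs_mul]
    exact mul_le_one₀ (hu1 _) (abs_nonneg _) (hu1 _)
  have hkey : ∀ l l' : Fin m, (∫ y : Fin m → Ω, u (y l) * u (y l') ∂(Measure.pi fun _ => μ))
      = if l = l' then ∫ x, u x ^ 2 ∂μ else 0 := by
    intro l l'
    by_cases h : l = l'
    · subst h
      rw [if_pos rfl]
      have : ∀ y : Fin m → Ω, u (y l) * u (y l) = (fun x => u x ^ 2) (y l) := by
        intro y; simp [sq]
      rw [integral_congr_ae (Filter.Eventually.of_forall this)]
      exact integral_eval μ l (fun x => u x ^ 2)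
    · rw [if_neg h, integral_eval_mul μ h u u, huzero, mul_zero]
  calc ∫ y : Fin m → Ω, (Sfun Y c y - m * p) ^ 2 ∂(Measure.pi fun _ => μ)
      = ∑ l : Fin m, ∑ l' : Fin m, ∫ y : Fin m → Ω, u (y l) * u (y l')
          ∂(Measure.pi fun _ => μ) := by
        rw [integral_congr_ae (Filter.Eventually.of_forall hsq)]
        rw [integral_finset_sum _ fun l _ => integrable_finset_sum _ fun l' _ => hterm_int l l']
        exact Finset.sum_congr rfl fun l _ => integral_finset_sum _ fun l' _ => hterm_int l l'
    _ = ∑ l : Fin m, ∫ x, u x ^ 2 ∂μ := by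
        refine Finset.sum_congr rfl fun l _ => ?_
        rw [Finset.sum_congr rfl fun l' _ => hkey l l']
        simp
    _ ≤ ∑ _l : Fin m, (1:ℝ) := by
        refine Finset.sum_le_sum fun l _ => ?_
        have hu2int : Integrable (fun x => u x ^ 2) μ :=
          Integrable.mono' (integrable_const 1) (hum.pow_const 2).aestronglyMeasurable
            (Filter.Eventually.of_forall fun x => by
              rw [Real.norm_eq_abs, abs_of_nonneg (sq_nonneg _)]
              nlinarith [hu1 x, sq_abs (u x), abs_nonneg (u x)])
        have : ∫ x, u x ^ 2 ∂μ ≤ ∫ _x, (1:ℝ) ∂μ :=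
          integral_mono hu2int (integrable_const 1) fun x => by
            nlinarith [hu1 x, sq_abs (u x), abs_nonneg (u x)]
        simpa using this
    _ = m := by simp

lemma measure_dev_le (hY : Measurable Y) (c : ℝ) (m : ℕ) {t : ℝ} (ht : 0 < t) :
    ((Measure.pi fun _ : Fin m => μ) {y | t ≤ |Sfun Y c y - m * prY μ Y c|}).toReal
      ≤ m / t ^ 2 := by
  set p := prY μ Y c with hp
  set f : (Fin m → Ω) → ℝ := fun y => (Sfun Y c y - m * p) ^ 2 with hf
  have hfm : Measurable f := ((Sfun_measurable hY c).sub measurable_const).pow_const 2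
  have hf0 : ∀ y, 0 ≤ f y := fun y => sq_nonneg _
  have hfbdd : ∀ y, |f y| ≤ (m + m * p) ^ 2 := by
    intro y
    rw [abs_of_nonneg (hf0 y)]
    have h1 := Sfun_nonneg (Y := Y) c y
    have h2 := Sfun_le (Y := Y) c y
    have hp0 : (0:ℝ) ≤ p := prY_nonneg μ (Y := Y) c
    have hm0 : (0:ℝ) ≤ m := Nat.cast_nonneg m
    show (Sfun Y c y - ↑m * p) ^ 2 ≤ (↑m + ↑m * p) ^ 2
    exact sq_le_sq' (by nlinarith) (by nlinarith)
  have hfint : Integrable f (Measure.pi fun _ : Fin m => μ) :=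
    Integrable.mono' (integrable_const _) hfm.aestronglyMeasurable
      (Filter.Eventually.of_forall fun y => by rw [Real.norm_eq_abs]; exact hfbdd y)
  have hsub : {y : Fin m → Ω | t ≤ |Sfun Y c y - m * p|} ⊆ {y | t ^ 2 ≤ f y} := by
    intro y hy
    simp only [mem_setOf_eq] at hy ⊢
    calc t ^ 2 ≤ |Sfun Y c y - m * p| ^ 2 := by
          exact pow_le_pow_left₀ ht.le hy 2
      _ = f y := by rw [sq_abs]
  have hmarkov := mul_meas_ge_le_integral_of_nonneg
    (Filter.Eventually.of_forall hf0) hfint (t ^ 2)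
  have hvar := integral_sq_dev_le μ hY c m
  have hmono : ((Measure.pi fun _ : Fin m => μ) {y | t ≤ |Sfun Y c y - m * p|}).toReal
      ≤ ((Measure.pi fun _ : Fin m => μ) {y | t ^ 2 ≤ f y}).toReal := by
    refine ENNReal.toReal_mono (measure_ne_top _ _) (measure_mono hsub)
  have ht2 : (0:ℝ) < t ^ 2 := by positivity
  rw [le_div_iff₀ ht2]
  calc ((Measure.pi fun _ : Fin m => μ) {y | t ≤ |Sfun Y c y - ↑m * p|}).toReal * t ^ 2
      ≤ ((Measure.pi fun _ : Fin m => μ) {y | t ^ 2 ≤ f y}).toReal * t ^ 2 := by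
        exact mul_le_mul_of_nonneg_right hmono ht2.le
    _ = t ^ 2 * ((Measure.pi fun _ : Fin m => μ) {y | t ^ 2 ≤ f y}).toReal := mul_comm _ _
    _ ≤ ∫ y, f y ∂(Measure.pi fun _ : Fin m => μ) := hmarkov
    _ ≤ m := hvar

lemma Bfun_nonneg (Y : Ω → ℝ) (m k : ℕ) (c : ℝ) : 0 ≤ Bfun μ Y m k c := ENNReal.toReal_nonneg

lemma Bfun_le_one (Y : Ω → ℝ) (m k : ℕ) (c : ℝ) : Bfun μ Y m k c ≤ 1 := by
  have := prob_le_one (μ := Measure.pi fun _ : Fin m => μ) (s := {y | Sfun Y c y < k})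
  simpa [Bfun] using ENNReal.toReal_mono ENNReal.one_ne_top this

lemma Bfun_le (hY : Measurable Y) {m k : ℕ} {c t : ℝ} (ht : 0 < t)
    (htk : t ≤ (m : ℝ) * prY μ Y c - k) :
    Bfun μ Y m k c ≤ (m : ℝ) / t ^ 2 := by
  set p := prY μ Y c with hp
  have hsub : {y : Fin m → Ω | Sfun Y c y < k} ⊆ {y | t ≤ |Sfun Y c y - m * p|} := by
    intro y hy
    simp only [mem_setOf_eq] at hy ⊢
    rw [abs_sub_comm]
    calc t ≤ (m:ℝ) * p - k := htk
      _ ≤ (m:ℝ) * p - Sfun Y c y := by linarith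
      _ ≤ |(m:ℝ) * p - Sfun Y c y| := le_abs_self _
  calc Bfun μ Y m k c
      ≤ ((Measure.pi fun _ : Fin m => μ) {y | t ≤ |Sfun Y c y - m * p|}).toReal :=
        ENNReal.toReal_mono (measure_ne_top _ _) (measure_mono hsub)
    _ ≤ m / t ^ 2 := measure_dev_le μ hY c m ht

lemma Bfun_ge (hY : Measurable Y) {m k : ℕ} {c t : ℝ} (ht : 0 < t)
    (htk : t ≤ (k : ℝ) - (m : ℝ) * prY μ Y c) :
    1 - (m : ℝ) / t ^ 2 ≤ Bfun μ Y m k c := by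
  set p := prY μ Y c with hp
  set π := Measure.pi fun _ : Fin m => μ with hπ
  have hms := measurableSet_Slt hY c k (m := m)
  have hsub : {y : Fin m → Ω | Sfun Y c y < k}ᶜ ⊆ {y | t ≤ |Sfun Y c y - m * p|} := by
    intro y hy
    simp only [mem_compl_iff, mem_setOf_eq, not_lt] at hy
    simp only [mem_setOf_eq]
    calc t ≤ (k:ℝ) - (m:ℝ) * p := htk
      _ ≤ Sfun Y c y - (m:ℝ) * p := by linarith
      _ ≤ |Sfun Y c y - (m:ℝ) * p| := le_abs_self _
  have hcompl : (π {y | Sfun Y c y < k}ᶜ).toReal ≤ m / t ^ 2 :=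
    le_trans (ENNReal.toReal_mono (measure_ne_top _ _) (measure_mono hsub))
      (measure_dev_le μ hY c m ht)
  have hadd : (π {y | Sfun Y c y < k}).toReal + (π {y | Sfun Y c y < k}ᶜ).toReal = 1 := by
    rw [← ENNReal.toReal_add (measure_ne_top _ _) (measure_ne_top _ _),
      measure_add_measure_compl hms]
    simp
  have : Bfun μ Y m k c = (π {y | Sfun Y c y < k}).toReal := rfl
  linarith

lemma measurable_Bfun (hY : Measurable Y) (m k : ℕ) :
    Measurable fun c => Bfun μ Y m k c := by
  have hSm : Measurable fun z : ℝ × (Fin m → Ω) => Sfun Y z.1 z.2 := by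
    unfold Sfun bfun
    refine Finset.measurable_sum _ fun l _ => ?_
    exact Measurable.ite
      (measurableSet_lt measurable_fst (by fun_prop))
      measurable_const measurable_const
  have hE : MeasurableSet {z : ℝ × (Fin m → Ω) | Sfun Y z.1 z.2 < k} :=
    measurableSet_lt hSm measurable_const
  exact (measurable_measure_prodMk_left hE).ennreal_toReal

lemma tendsto_Bfun (hY : Measurable Y) (c : ℝ) {η : ℝ} (hη0 : 0 < η) (hη1 : η < 1)
    (hp : prY μ Y c ≠ η) :
    Tendsto (fun n : ℕ => Bfun μ Y (n - 1) ⌊η * ↑n⌋₊ c) atTop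
      (nhds (if prY μ Y c < η then 1 else 0)) := by
  set p := prY μ Y c with hpdef
  have hp0 : 0 ≤ p := prY_nonneg μ c
  have hp1 : p ≤ 1 := prY_le_one μ c
  clear_value p
  rcases lt_or_gt_of_ne hp with hlt | hgt
  · -- p < η : Bfun → 1
    rw [if_pos hlt]
    set δ := η - p with hδdef
    have hδ : 0 < δ := sub_pos.2 hlt
    clear_value δ
    have hlow : Tendsto (fun n : ℕ => 1 - (4 / δ ^ 2) / (n:ℝ)) atTop (nhds 1) := by
      have := (tendsto_const_div_atTop_nhds_zero_nat (4 / δ ^ 2)).const_sub 1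
      simpa using this
    refine tendsto_of_tendsto_of_tendsto_of_le_of_le' hlow tendsto_const_nhds ?_ ?_
    · -- eventually lower bound
      have hev : ∀ᶠ n : ℕ in atTop, (2 / δ ≤ (n:ℝ) ∧ 1 ≤ n) := by
        filter_upwards [eventually_ge_atTop (⌈2/δ⌉₊ + 1)] with n hn
        constructor
        · calc (2/δ : ℝ) ≤ ⌈2/δ⌉₊ := Nat.le_ceil _
            _ ≤ (n:ℝ) := by exact_mod_cast le_trans (Nat.le_succ _) hn
        · omega
      filter_upwards [hev] with n hn
      obtain ⟨hn2, hn1⟩ := hn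
      have hnpos : (0:ℝ) < n := by
        have : (0:ℝ) < 2/δ := by positivity
        linarith
      have hmcast : ((n - 1 : ℕ) : ℝ) = (n:ℝ) - 1 := by
        rw [Nat.cast_sub hn1]; norm_num
      set t : ℝ := (⌊η * (n:ℝ)⌋₊ : ℝ) - ((n - 1 : ℕ) : ℝ) * p with htdef
      clear_value t
      have hfl : η * (n:ℝ) - 1 < (⌊η * (n:ℝ)⌋₊ : ℝ) := Nat.sub_one_lt_floor _
      have hmp : ((n - 1 : ℕ) : ℝ) * p ≤ (n:ℝ) * p := by
        rw [hmcast]; nlinarith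
      have hnd : 2 ≤ (n:ℝ) * δ := by
        rw [div_le_iff₀ hδ] at hn2; linarith
      have htge : (n:ℝ) * δ / 2 ≤ t := by
        have : (n:ℝ) * δ - 1 ≤ t := by
          simp only [htdef, hδdef]
          nlinarith
        linarith
      have htpos : 0 < t := by nlinarith
      have hB := Bfun_ge μ hY (m := n - 1) (k := ⌊η * (n:ℝ)⌋₊) (c := c) htpos (by rw [← hpdef]; exact le_of_eq htdef)
      refine le_trans ?_ hB
      have hfrac : ((n-1:ℕ):ℝ) / t ^ 2 ≤ (4 / δ ^ 2) / (n:ℝ) := by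
        have h1 : ((n-1:ℕ):ℝ) ≤ (n:ℝ) := by rw [hmcast]; linarith
        have h2 : (0:ℝ) < ((n:ℝ) * δ / 2) ^ 2 := by positivity
        calc ((n-1:ℕ):ℝ) / t ^ 2 ≤ (n:ℝ) / ((n:ℝ) * δ / 2) ^ 2 := by
              apply div_le_div₀ (by linarith) h1 h2
              exact pow_le_pow_left₀ (by positivity) htge 2
          _ = (4 / δ ^ 2) / (n:ℝ) := by
              field_simp
              ring
      linarith
    · exact Filter.Eventually.of_forall fun n => Bfun_le_one μ Y _ _ c
  · -- p > η : Bfun → 0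
    rw [if_neg (not_lt.2 hgt.le)]
    set δ := p - η with hδdef
    have hδ : 0 < δ := sub_pos.2 hgt
    clear_value δ
    apply squeeze_zero' (Filter.Eventually.of_forall fun n => Bfun_nonneg μ Y _ _ c)
      ?_ (tendsto_const_div_atTop_nhds_zero_nat (4 / δ ^ 2))
    have hev : ∀ᶠ n : ℕ in atTop, (2 / δ ≤ (n:ℝ) ∧ 1 ≤ n) := by
      filter_upwards [eventually_ge_atTop (⌈2/δ⌉₊ + 1)] with n hn
      constructor
      · calc (2/δ : ℝ) ≤ ⌈2/δ⌉₊ := Nat.le_ceil _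
          _ ≤ (n:ℝ) := by exact_mod_cast le_trans (Nat.le_succ _) hn
      · omega
    filter_upwards [hev] with n hn
    obtain ⟨hn2, hn1⟩ := hn
    have hnpos : (0:ℝ) < n := by
      have : (0:ℝ) < 2/δ := by positivity
      linarith
    have hmcast : ((n - 1 : ℕ) : ℝ) = (n:ℝ) - 1 := by
      rw [Nat.cast_sub hn1]; norm_num
    set t : ℝ := ((n - 1 : ℕ) : ℝ) * p - (⌊η * (n:ℝ)⌋₊ : ℝ) with htdef
    clear_value t
    have hfl : (⌊η * (n:ℝ)⌋₊ : ℝ) ≤ η * (n:ℝ) := Nat.floor_le (by positivity)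
    have hnd : 2 ≤ (n:ℝ) * δ := by
      rw [div_le_iff₀ hδ] at hn2; linarith
    have htge : (n:ℝ) * δ / 2 ≤ t := by
      have h' : (n:ℝ) * δ - 1 ≤ t := by
        simp only [htdef, hδdef]
        rw [hmcast]
        nlinarith
      linarith [h', hnd]
    have htpos : 0 < t := by nlinarith
    have hB := Bfun_le μ hY (m := n - 1) (k := ⌊η * (n:ℝ)⌋₊) (c := c) htpos (by rw [← hpdef]; exact le_of_eq htdef)
    refine le_trans hB ?_
    have h1 : ((n-1:ℕ):ℝ) ≤ (n:ℝ) := by rw [hmcast]; linarith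
    have h2 : (0:ℝ) < ((n:ℝ) * δ / 2) ^ 2 := by positivity
    calc ((n-1:ℕ):ℝ) / t ^ 2 ≤ (n:ℝ) / ((n:ℝ) * δ / 2) ^ 2 := by
          apply div_le_div₀ (by linarith) h1 h2
          exact pow_le_pow_left₀ (by positivity) htge 2
      _ = (4 / δ ^ 2) / (n:ℝ) := by
          field_simp
          ring

lemma integral_topQuantileAvg (hY : Measurable Y) {J : Ω → ℝ} (hJmeas : Measurable J)
    {C : ℝ} (hJbdd : ∀ ω, |J ω| ≤ C) (m k : ℕ) :
    ∫ x : Fin (m + 1) → Ω, topQuantileAvg Y J k x ∂(Measure.pi fun _ : Fin (m+1) => μ)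
      = (k : ℝ)⁻¹ * (↑(m + 1) : ℝ) * ∫ a, J a * Bfun μ Y m k (Y a) ∂μ := by
  classical
  have hΩ : Nonempty Ω := by
    by_contra h
    rw [not_nonempty_iff] at h
    have h1 := measure_univ (μ := μ)
    rw [Set.univ_eq_empty_iff.2 h] at h1
    simp at h1
  have hC0 : 0 ≤ C := le_trans (abs_nonneg _) (hJbdd (Classical.arbitrary Ω))
  set π := (Measure.pi fun _ : Fin (m+1) => μ) with hπ
  set f : Fin (m+1) → (Fin (m+1) → Ω) → ℝ :=
    fun i x => if Sfun Y (Y (x i)) x < k then J (x i) else 0 with hfdef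
  -- measurability of the S-condition
  have hSmeas : ∀ i : Fin (m+1), Measurable fun x : Fin (m+1) → Ω => Sfun Y (Y (x i)) x := by
    intro i
    unfold Sfun bfun
    refine Finset.measurable_sum _ fun l _ => ?_
    exact Measurable.ite (measurableSet_lt (hY.comp (measurable_pi_apply i))
      (hY.comp (measurable_pi_apply l))) measurable_const measurable_const
  have hfm : ∀ i, Measurable (f i) := by
    intro i
    exact Measurable.ite (measurableSet_lt (hSmeas i) measurable_const)
      (hJmeas.comp (measurable_pi_apply i)) measurable_const
  have hfbdd : ∀ i x, |f i x| ≤ C := by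
    intro i x
    simp only [hfdef]
    split
    · exact hJbdd _
    · simpa using hC0
  have hfi : ∀ i, Integrable (f i) π := by
    intro i
    exact Integrable.mono' (integrable_const C) (hfm i).aestronglyMeasurable
      (Filter.Eventually.of_forall fun x => by rw [Real.norm_eq_abs]; exact hfbdd i x)
  -- step 0 : rewrite topQuantileAvg
  have hTop : ∀ x : Fin (m+1) → Ω, topQuantileAvg Y J k x = (k:ℝ)⁻¹ * ∑ i, f i x := by
    intro x
    unfold topQuantileAvg
    congr 1
    refine Finset.sum_congr rfl fun i _ => ?_
    simp only [hfdef]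
    by_cases h : Sfun Y (Y (x i)) x < k
    · rw [if_pos ((card_lt_iff_Sfun (Y (x i)) x k).2 h), if_pos h]
    · rw [if_neg (fun hh => h ((card_lt_iff_Sfun (Y (x i)) x k).1 hh)), if_neg h]
  -- step 1 : symmetry
  have hsymm : ∀ i : Fin (m+1), ∫ x, f i x ∂π = ∫ x, f 0 x ∂π := by
    intro i
    set e : Equiv.Perm (Fin (m+1)) := Equiv.swap 0 i with he
    set Φ := MeasurableEquiv.piCongrLeft (fun _ : Fin (m+1) => Ω) e with hΦ
    have MP : MeasurePreserving Φ π π :=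
      measurePreserving_piCongrLeft (fun _ : Fin (m+1) => μ) e
    have hΦap : ∀ (x : Fin (m+1) → Ω) (j : Fin (m+1)), Φ x j = x (e.symm j) := by
      intro x j
      conv_lhs => rw [← Equiv.apply_symm_apply e j]
      rw [hΦ]
      exact Equiv.piCongrLeft_apply_apply (fun _ => Ω) e x (e.symm j)
    have hcomp : ∀ x, f 0 (Φ x) = f i x := by
      intro x
      have h0 : Φ x 0 = x i := by
        rw [hΦap x 0, he]
        simp [Equiv.symm_swap, Equiv.swap_apply_left]
      have hS : Sfun Y (Y (x i)) (Φ x) = Sfun Y (Y (x i)) x := by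
        unfold Sfun
        rw [← Equiv.sum_comp e.symm fun l => bfun Y (Y (x i)) (x l)]
        exact Finset.sum_congr rfl fun l _ => by rw [hΦap]
      simp only [hfdef, h0, hS]
    rw [← MP.integral_comp' (f 0)]
    exact integral_congr_ae (Filter.Eventually.of_forall fun x => (hcomp x).symm)
  -- step 2 : Fubini at coordinate 0
  have hfub : ∫ x, f 0 x ∂π = ∫ a, J a * Bfun μ Y m k (Y a) ∂μ := by
    set Φ₂ := MeasurableEquiv.piFinSuccAbove (fun _ : Fin (m+1) => Ω) 0 with hΦ₂
    have MP2 : MeasurePreserving Φ₂ π ((μ).prod (Measure.pi fun _ : Fin m => μ)) :=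
      measurePreserving_piFinSuccAbove (fun _ : Fin (m+1) => μ) 0
    set G : Ω × (Fin m → Ω) → ℝ :=
      fun z => if Sfun Y (Y z.1) z.2 < k then J z.1 else 0 with hG
    have hGm : Measurable G := by
      have hSm : Measurable fun z : Ω × (Fin m → Ω) => Sfun Y (Y z.1) z.2 := by
        unfold Sfun bfun
        refine Finset.measurable_sum _ fun l _ => ?_
        exact Measurable.ite (measurableSet_lt (hY.comp measurable_fst) (by fun_prop))
          measurable_const measurable_const
      exact Measurable.ite (measurableSet_lt hSm measurable_const)
        (hJmeas.comp measurable_fst) measurable_const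
    have hGcomp : ∀ x, G (Φ₂ x) = f 0 x := by
      intro x
      have h1 : (Φ₂ x).1 = x 0 := rfl
      have h2 : ∀ j : Fin m, (Φ₂ x).2 j = x (Fin.succ j) := by
        intro j
        show x (Fin.succAbove 0 j) = x (Fin.succ j)
        rw [Fin.succAbove_zero]
      have hS : Sfun Y (Y (x 0)) ((Φ₂ x).2) = Sfun Y (Y (x 0)) x := by
        unfold Sfun
        rw [Fin.sum_univ_succ (f := fun l => bfun Y (Y (x 0)) (x l))]
        have : bfun Y (Y (x 0)) (x 0) = 0 := by simp [bfun]
        rw [this, zero_add]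
        exact Finset.sum_congr rfl fun j _ => by rw [h2 j]
      simp only [hG, hfdef, h1, hS]
    have hGint : Integrable G ((μ).prod (Measure.pi fun _ : Fin m => μ)) := by
      refine Integrable.mono' (integrable_const C) hGm.aestronglyMeasurable
        (Filter.Eventually.of_forall fun z => ?_)
      rw [Real.norm_eq_abs, hG]
      simp only
      split
      · exact hJbdd _
      · simpa using hC0
    calc ∫ x, f 0 x ∂π = ∫ x, G (Φ₂ x) ∂π :=
          integral_congr_ae (Filter.Eventually.of_forall fun x => (hGcomp x).symm)
      _ = ∫ z, G z ∂((μ).prod (Measure.pi fun _ : Fin m => μ)) := MP2.integral_comp' G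
      _ = ∫ a, ∫ y, G (a, y) ∂(Measure.pi fun _ : Fin m => μ) ∂μ := integral_prod G hGint
      _ = ∫ a, J a * Bfun μ Y m k (Y a) ∂μ := by
          refine integral_congr_ae (Filter.Eventually.of_forall fun a => ?_)
          show (∫ y, G (a, y) ∂(Measure.pi fun _ : Fin m => μ)) = J a * Bfun μ Y m k (Y a)
          have hind : ∀ y : Fin m → Ω, G (a, y)
              = Set.indicator {y : Fin m → Ω | Sfun Y (Y a) y < k} (fun _ => J a) y := by
            intro y
            simp only [hG, Set.indicator_apply, mem_setOf_eq]
          have h2 : ∫ y, G (a, y) ∂(Measure.pi fun _ : Fin m => μ)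
              = ∫ y, Set.indicator {y : Fin m → Ω | Sfun Y (Y a) y < k}
                  (fun _ => J a) y ∂(Measure.pi fun _ : Fin m => μ) :=
            integral_congr_ae (Filter.Eventually.of_forall hind)
          rw [h2, integral_indicator_const _ (measurableSet_Slt hY (Y a) k),
            smul_eq_mul, mul_comm]
          rfl
  -- assemble
  calc ∫ x, topQuantileAvg Y J k x ∂π = ∫ x, (k:ℝ)⁻¹ * ∑ i, f i x ∂π :=
        integral_congr_ae (Filter.Eventually.of_forall fun x => hTop x)
    _ = (k:ℝ)⁻¹ * ∫ x, ∑ i, f i x ∂π := integral_const_mul _ _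
    _ = (k:ℝ)⁻¹ * ∑ i, ∫ x, f i x ∂π := by rw [integral_finset_sum _ fun i _ => hfi i]
    _ = (k:ℝ)⁻¹ * ∑ _i : Fin (m+1), ∫ x, f 0 x ∂π := by
        rw [Finset.sum_congr rfl fun i _ => hsymm i]
    _ = (k:ℝ)⁻¹ * (↑(m+1) * ∫ x, f 0 x ∂π) := by
        rw [Finset.sum_const, Finset.card_univ, Fintype.card_fin, nsmul_eq_mul]
    _ = (k:ℝ)⁻¹ * (↑(m + 1) : ℝ) * ∫ a, J a * Bfun μ Y m k (Y a) ∂μ := by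
        rw [hfub, mul_assoc]

lemma null_level (hY : Measurable Y) (hatomless : ∀ c : ℝ, μ {ω | Y ω = c} = 0) (r : ℝ) :
    μ {a | prY μ Y (Y a) = r} = 0 := by
  classical
  set T : Set ℝ := {c | prY μ Y c = r} with hT
  have hgoal : {a | prY μ Y (Y a) = r} = Y ⁻¹' T := rfl
  rw [hgoal]
  rcases eq_empty_or_nonempty T with hTe | ⟨c₀, hc₀⟩
  · rw [hTe]; simp
  -- key : between two points of T the law has no mass
  have key : ∀ c₁ ∈ T, ∀ c₂ ∈ T, c₁ ≤ c₂ → μ (Y ⁻¹' Ioc c₁ c₂) = 0 := by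
    intro c₁ h₁ c₂ h₂ h12
    have hsplit : {x | c₁ < Y x} = (Y ⁻¹' Ioc c₁ c₂) ∪ {x | c₂ < Y x} := by
      ext x
      simp only [mem_setOf_eq, mem_union, mem_preimage, mem_Ioc]
      constructor
      · intro h
        rcases le_or_gt (Y x) c₂ with h' | h'
        · exact Or.inl ⟨h, h'⟩
        · exact Or.inr h'
      · rintro (⟨h, _⟩ | h)
        · exact h
        · linarith
    have hdisj : Disjoint (Y ⁻¹' Ioc c₁ c₂) {x | c₂ < Y x} := by
      rw [Set.disjoint_left]
      rintro x ⟨_, hx2⟩ hx3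
      exact absurd hx3 (not_lt.2 hx2)
    have hmeas2 : MeasurableSet {x | c₂ < Y x} := measurableSet_lt measurable_const hY
    have hadd : μ {x | c₁ < Y x} = μ (Y ⁻¹' Ioc c₁ c₂) + μ {x | c₂ < Y x} := by
      rw [hsplit, measure_union hdisj hmeas2]
    have heq : μ {x | c₁ < Y x} = μ {x | c₂ < Y x} := by
      have e1 : (μ {x | c₁ < Y x}).toReal = (μ {x | c₂ < Y x}).toReal := by
        have := h₁; have := h₂
        simp only [hT, mem_setOf_eq, prY] at *
        rw [h₁, h₂]
      exact (ENNReal.toReal_eq_toReal_iff' (measure_ne_top _ _) (measure_ne_top _ _)).1 e1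
    rw [heq] at hadd
    have h0 : (0 : ENNReal) + μ {x | c₂ < Y x} = μ (Y ⁻¹' Ioc c₁ c₂) + μ {x | c₂ < Y x} := by
      rw [zero_add]; exact hadd
    exact ((ENNReal.add_left_inj (measure_ne_top μ _)).1 h0).symm
  -- covering argument
  have hsplitT : Y ⁻¹' T ⊆ (Y ⁻¹' (T ∩ Iio c₀)) ∪ (Y ⁻¹' {c₀}) ∪ (Y ⁻¹' (T ∩ Ioi c₀)) := by
    intro a ha
    rcases lt_trichotomy (Y a) c₀ with h | h | h
    · exact Or.inl (Or.inl ⟨ha, h⟩)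
    · exact Or.inl (Or.inr h)
    · exact Or.inr ⟨ha, h⟩
  refine measure_mono_null hsplitT (measure_union_null (measure_union_null ?_ ?_) ?_)
  · -- lower part
    set L : ℚ → Set Ω := fun q => {a | Y a ∈ Ioc (q:ℝ) c₀ ∧ μ (Y ⁻¹' Ioc (q:ℝ) c₀) = 0}
      with hL
    have hLnull : ∀ q : ℚ, μ (L q) = 0 := by
      intro q
      by_cases hq : μ (Y ⁻¹' Ioc (q:ℝ) c₀) = 0
      · refine measure_mono_null ?_ hq
        intro a ha
        exact ha.1
      · have : L q = ∅ := by
          ext a; simp only [hL, mem_setOf_eq, mem_empty_iff_false, iff_false]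
          rintro ⟨_, h⟩; exact hq h
        rw [this]; exact measure_empty
    have hsub : Y ⁻¹' (T ∩ Iio c₀) ⊆ (⋃ q : ℚ, L q) ∪ {a | IsLeast T (Y a)} := by
      rintro a ⟨haT, halt⟩
      by_cases hle : IsLeast T (Y a)
      · exact Or.inr hle
      · left
        have : ∃ y ∈ T, y < Y a := by
          by_contra hcon
          push_neg at hcon
          exact hle ⟨haT, fun y hy => hcon y hy⟩
        obtain ⟨y, hyT, hy⟩ := this
        obtain ⟨q, hq1, hq2⟩ := exists_rat_btwn hy
        refine mem_iUnion.2 ⟨q, ?_, ?_⟩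
        · exact ⟨hq2, le_of_lt halt⟩
        · refine measure_mono_null ?_ (key y hyT c₀ hc₀ (by linarith [mem_Iio.1 halt]))
          intro b hb
          exact ⟨lt_trans hq1 hb.1, hb.2⟩
    refine measure_mono_null hsub (measure_union_null (measure_iUnion_null hLnull) ?_)
    rcases isEmpty_or_nonempty {c : ℝ // IsLeast T c} with hno | ⟨⟨cmin, hcm⟩⟩
    · have : {a | IsLeast T (Y a)} = ∅ := by
        ext a; simp only [mem_setOf_eq, mem_empty_iff_false, iff_false]
        intro h; exact hno.false ⟨Y a, h⟩
      rw [this]; exact measure_empty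
    · refine measure_mono_null ?_ (hatomless cmin)
      intro a ha
      exact (hcm.unique ha).symm
  · exact hatomless c₀
  · -- upper part
    set U : ℚ → Set Ω := fun q => {a | Y a ∈ Ioc c₀ (q:ℝ) ∧ μ (Y ⁻¹' Ioc c₀ (q:ℝ)) = 0}
      with hU
    have hUnull : ∀ q : ℚ, μ (U q) = 0 := by
      intro q
      by_cases hq : μ (Y ⁻¹' Ioc c₀ (q:ℝ)) = 0
      · refine measure_mono_null ?_ hq
        intro a ha
        exact ha.1
      · have : U q = ∅ := by
          ext a; simp only [hU, mem_setOf_eq, mem_empty_iff_false, iff_false]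
          rintro ⟨_, h⟩; exact hq h
        rw [this]; exact measure_empty
    have hsub : Y ⁻¹' (T ∩ Ioi c₀) ⊆ (⋃ q : ℚ, U q) ∪ {a | IsGreatest T (Y a)} := by
      rintro a ⟨haT, hagt⟩
      by_cases hge : IsGreatest T (Y a)
      · exact Or.inr hge
      · left
        have : ∃ y ∈ T, Y a < y := by
          by_contra hcon
          push_neg at hcon
          exact hge ⟨haT, fun y hy => hcon y hy⟩
        obtain ⟨y, hyT, hy⟩ := this
        obtain ⟨q, hq1, hq2⟩ := exists_rat_btwn hy
        refine mem_iUnion.2 ⟨q, ?_, ?_⟩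
        · exact ⟨mem_Ioi.1 hagt, le_of_lt hq1⟩
        · refine measure_mono_null ?_ (key c₀ hc₀ y hyT (by linarith [mem_Ioi.1 hagt]))
          intro b hb
          exact ⟨hb.1, le_of_lt (lt_of_le_of_lt hb.2 hq2)⟩
    refine measure_mono_null hsub (measure_union_null (measure_iUnion_null hUnull) ?_)
    rcases isEmpty_or_nonempty {c : ℝ // IsGreatest T c} with hno | ⟨⟨cmax, hcm⟩⟩
    · have : {a | IsGreatest T (Y a)} = ∅ := by
        ext a; simp only [mem_setOf_eq, mem_empty_iff_false, iff_false]
        intro h; exact hno.false ⟨Y a, h⟩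
      rw [this]; exact measure_empty
    · refine measure_mono_null ?_ (hatomless cmax)
      intro a ha
      exact (hcm.unique ha).symm

end Aux

end RetaProof
open RetaProof in
/-- Let `μ` be a probability measure on `Ω`, `Y : Ω → ℝ` measurable with
atomless law (continuous CDF `F`), and `J : Ω → ℝ` bounded and measurable. Let `η ∈ (0,1)` be a
continuity point of the upper quantile function `Θ η = inf {x : F x ≥ 1 - η}`. For i.i.d.
samples `ω_1, …, ω_n ∼ μ` (modeled by the product measure on `Fin n → Ω`), let `T_n` be the
average of `J` over the `⌊ηn⌋` samples with the largest `Y`-values. Then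
`lim_{n→∞} E[T_n] = (1/η) · E[J · 1{Y ≥ Θ η}]`. -/
theorem reta_limit_eq_restricted_integral
    {Ω : Type*} [MeasurableSpace Ω] (μ : Measure Ω) [IsProbabilityMeasure μ]
    (Y : Ω → ℝ) (hY : Measurable Y)
    (hatomless : ∀ c : ℝ, μ {ω | Y ω = c} = 0)
    (J : Ω → ℝ) (hJmeas : Measurable J) (hJbdd : ∃ C : ℝ, ∀ ω, |J ω| ≤ C)
    (F : ℝ → ℝ) (hF : ∀ x, F x = (μ {ω | Y ω ≤ x}).toReal)
    (Θ : ℝ → ℝ) (hΘ : ∀ t, Θ t = sInf {x : ℝ | 1 - t ≤ F x})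
    (η : ℝ) (hη : η ∈ Set.Ioo (0 : ℝ) 1) (hcontΘ : ContinuousAt Θ η) :
    Tendsto
      (fun n => ∫ x : Fin n → Ω, topQuantileAvg Y J ⌊η * n⌋₊ x
        ∂(Measure.pi fun _ : Fin n => μ))
      atTop
      (nhds (η⁻¹ * ∫ ω in {ω | Θ η ≤ Y ω}, J ω ∂μ)) := by
  classical
  obtain ⟨hη0, hη1⟩ := hη
  obtain ⟨C, hJbdd⟩ := hJbdd
  have hΩ : Nonempty Ω := by
    by_contra h
    rw [not_nonempty_iff] at h
    have h1 := measure_univ (μ := μ)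
    rw [Set.univ_eq_empty_iff.2 h] at h1
    simp at h1
  have hC0 : 0 ≤ C := le_trans (abs_nonneg _) (hJbdd (Classical.arbitrary Ω))
  -- basic facts about F
  have hFprY : ∀ c, F c + prY μ Y c = 1 := by
    intro c
    have hcompl : {x | c < Y x} = {ω | Y ω ≤ c}ᶜ := by
      ext x; simp [not_le]
    have hmeas : MeasurableSet {ω | Y ω ≤ c} := measurableSet_le hY measurable_const
    have hsum := measure_add_measure_compl (μ := μ) hmeas
    rw [hF c, prY, hcompl, ← ENNReal.toReal_add (measure_ne_top _ _) (measure_ne_top _ _), hsum]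
    simp
  have hFmono : Monotone F := by
    intro c d hcd
    rw [hF c, hF d]
    exact ENNReal.toReal_mono (measure_ne_top _ _)
      (measure_mono fun x hx => le_trans hx hcd)
  -- the set defining Θ η
  set Sset : Set ℝ := {x : ℝ | 1 - η ≤ F x} with hSset
  have hSne : Sset.Nonempty := by
    have hmono2 : Monotone fun n : ℕ => {ω | Y ω ≤ (n:ℝ)} := by
      intro n n' hnn' x hx
      simp only [mem_setOf_eq] at hx ⊢
      exact le_trans hx (by exact_mod_cast hnn')
    have h1 := tendsto_measure_iUnion_atTop (μ := μ) hmono2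
    have huniv : ⋃ n : ℕ, {ω | Y ω ≤ (n:ℝ)} = univ := by
      ext x
      simp only [mem_iUnion, mem_setOf_eq, mem_univ, iff_true]
      exact exists_nat_ge (Y x)
    rw [huniv, measure_univ] at h1
    have hlt : ENNReal.ofReal (1 - η) < 1 := by
      rw [show (1:ENNReal) = ENNReal.ofReal 1 by simp]
      exact (ENNReal.ofReal_lt_ofReal_iff one_pos).2 (by linarith)
    obtain ⟨n, hn⟩ := (h1.eventually (eventually_gt_nhds hlt)).exists
    refine ⟨(n:ℝ), ?_⟩
    have : ENNReal.ofReal (1 - η) ≤ μ {ω | Y ω ≤ (n:ℝ)} := le_of_lt hn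
    have h2 : (1 - η) ≤ (μ {ω | Y ω ≤ (n:ℝ)}).toReal := by
      have := ENNReal.toReal_mono (measure_ne_top _ _) this
      rwa [ENNReal.toReal_ofReal (by linarith)] at this
    rw [hSset, mem_setOf_eq, hF]
    exact h2
  have hSbdd : BddBelow Sset := by
    have hanti : Antitone fun n : ℕ => {ω | Y ω ≤ -(n:ℝ)} := by
      intro n n' hnn' x hx
      simp only [mem_setOf_eq] at *
      have : -(n':ℝ) ≤ -(n:ℝ) := by exact_mod_cast neg_le_neg (by exact_mod_cast hnn')
      linarith
    have h1 := tendsto_measure_iInter_atTop (μ := μ)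
      (fun n => (measurableSet_le hY measurable_const).nullMeasurableSet) hanti
      ⟨0, measure_ne_top _ _⟩
    have hempty : ⋂ n : ℕ, {ω | Y ω ≤ -(n:ℝ)} = ∅ := by
      ext x
      simp only [mem_iInter, mem_setOf_eq, mem_empty_iff_false, iff_false, not_forall]
      obtain ⟨n, hn⟩ := exists_nat_gt (-(Y x))
      exact ⟨n, by push_neg; linarith⟩
    rw [hempty, measure_empty] at h1
    have hpos : (0:ENNReal) < ENNReal.ofReal (1 - η) := ENNReal.ofReal_pos.2 (by linarith)
    obtain ⟨n, hn⟩ := (h1.eventually (eventually_lt_nhds hpos)).exists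
    refine ⟨-(n:ℝ), fun y hy => ?_⟩
    by_contra hcon
    push_neg at hcon
    have h2 : F y ≤ F (-(n:ℝ)) := hFmono hcon.le
    have h3 : F (-(n:ℝ)) < 1 - η := by
      rw [hF]
      exact ENNReal.toReal_lt_of_lt_ofReal hn
    rw [hSset, mem_setOf_eq] at hy
    linarith
  have hΘη : Θ η = sInf Sset := hΘ η
  have claimA : ∀ a, Θ η < Y a → prY μ Y (Y a) ≤ η := by
    intro a h
    rw [hΘη] at h
    obtain ⟨x, hxS, hxlt⟩ := (csInf_lt_iff hSbdd hSne).1 h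
    have h1 : 1 - η ≤ F (Y a) := le_trans hxS (hFmono hxlt.le)
    have h2 := hFprY (Y a)
    linarith
  have claimB : ∀ a, Y a < Θ η → η < prY μ Y (Y a) := by
    intro a h
    have hnot : Y a ∉ Sset := by
      intro hx
      have := csInf_le hSbdd hx
      rw [← hΘη] at this
      linarith
    have h1 : F (Y a) < 1 - η := not_le.1 hnot
    have h2 := hFprY (Y a)
    linarith
  -- integrand sequence and limit
  set g : ℕ → Ω → ℝ := fun n a =>
    ((⌊η * (n:ℝ)⌋₊ : ℝ)⁻¹ * (n:ℝ)) * (J a * Bfun μ Y (n - 1) ⌊η * (n:ℝ)⌋₊ (Y a)) with hg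
  set gl : Ω → ℝ := fun a => η⁻¹ * (J a * (if prY μ Y (Y a) < η then 1 else 0)) with hgl
  have hcoef : ∀ n : ℕ, 0 ≤ (⌊η * (n:ℝ)⌋₊ : ℝ)⁻¹ * (n:ℝ)
      ∧ (⌊η * (n:ℝ)⌋₊ : ℝ)⁻¹ * (n:ℝ) ≤ 2 / η := by
    intro n
    constructor
    · positivity
    · by_cases hk : ⌊η * (n:ℝ)⌋₊ = 0
      · rw [hk]
        simp
        positivity
      · have hk1 : 1 ≤ ⌊η * (n:ℝ)⌋₊ := Nat.one_le_iff_ne_zero.2 hk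
        have hkr : (1:ℝ) ≤ (⌊η * (n:ℝ)⌋₊ : ℝ) := by exact_mod_cast hk1
        have hflle : (⌊η * (n:ℝ)⌋₊ : ℝ) ≤ η * n := Nat.floor_le (by positivity)
        have h1 : (1:ℝ) ≤ η * n := le_trans hkr hflle
        have hfl : η * (n:ℝ) - 1 < (⌊η * (n:ℝ)⌋₊ : ℝ) := Nat.sub_one_lt_floor _
        have hhalf : η * (n:ℝ) / 2 ≤ (⌊η * (n:ℝ)⌋₊ : ℝ) := by
          rcases le_or_gt 2 (η * n) with h2 | h2
          · linarith
          · linarith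
        have hkpos : (0:ℝ) < (⌊η * (n:ℝ)⌋₊ : ℝ) := lt_of_lt_of_le one_pos hkr
        rw [inv_mul_le_iff₀ hkpos]
        calc (n:ℝ) = (η * n / 2) * (2 / η) := by field_simp
          _ ≤ (⌊η * (n:ℝ)⌋₊ : ℝ) * (2 / η) :=
              mul_le_mul_of_nonneg_right hhalf (by positivity)
  -- dominated convergence
  have hDCT : Tendsto (fun n => ∫ a, g n a ∂μ) atTop (nhds (∫ a, gl a ∂μ)) := by
    refine tendsto_integral_of_dominated_convergence (fun _ => 2 / η * C) ?_ ?_ ?_ ?_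
    · intro n
      exact ((hJmeas.mul ((measurable_Bfun μ hY (n - 1) ⌊η * (n:ℝ)⌋₊).comp hY)).const_mul
        _).aestronglyMeasurable
    · exact integrable_const _
    · intro n
      refine Filter.Eventually.of_forall fun a => ?_
      obtain ⟨h0, h2⟩ := hcoef n
      have hB0 := Bfun_nonneg μ Y (n - 1) ⌊η * (n:ℝ)⌋₊ (Y a)
      have hB1 := Bfun_le_one μ Y (n - 1) ⌊η * (n:ℝ)⌋₊ (Y a)
      have hJa := hJbdd a
      simp only [hg, Real.norm_eq_abs]
      calc |((⌊η * (n:ℝ)⌋₊ : ℝ)⁻¹ * (n:ℝ)) * (J a * Bfun μ Y (n - 1) ⌊η * (n:ℝ)⌋₊ (Y a))|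
          = ((⌊η * (n:ℝ)⌋₊ : ℝ)⁻¹ * (n:ℝ)) * (|J a| * Bfun μ Y (n - 1) ⌊η * (n:ℝ)⌋₊ (Y a)) := by
            rw [abs_mul, abs_of_nonneg h0, abs_mul, abs_of_nonneg hB0]
        _ ≤ (2 / η) * C := by
            refine mul_le_mul h2 ?_ (by positivity) (by positivity)
            calc |J a| * Bfun μ Y (n - 1) ⌊η * (n:ℝ)⌋₊ (Y a) ≤ C * 1 :=
                  mul_le_mul hJa hB1 hB0 hC0
              _ = C := mul_one C
    · rw [ae_iff]
      refine measure_mono_null (fun a ha => ?_) (null_level μ hY hatomless η)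
      simp only [mem_setOf_eq] at ha ⊢
      by_contra hane
      apply ha
      have t1 : Tendsto (fun n : ℕ => (⌊η * (n:ℝ)⌋₊ : ℝ) / (n:ℝ)) atTop (nhds η) :=
        (tendsto_nat_floor_mul_div_atTop hη0.le).comp tendsto_natCast_atTop_atTop
      have t2 := t1.inv₀ (ne_of_gt hη0)
      have t2' : Tendsto (fun n : ℕ => (⌊η * (n:ℝ)⌋₊ : ℝ)⁻¹ * (n:ℝ)) atTop (nhds η⁻¹) := by
        refine t2.congr fun n => ?_
        rw [inv_div, div_eq_mul_inv, mul_comm]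
      have t3 := tendsto_Bfun μ hY (Y a) hη0 hη1 hane
      have := t2'.mul (t3.const_mul (J a))
      simp only [hg, hgl]
      exact this
  -- the limit integral
  have hmeasset : MeasurableSet {a : Ω | prY μ Y (Y a) < η} :=
    measurableSet_lt ((prY_measurable μ hY).comp hY) measurable_const
  have hae : {a | prY μ Y (Y a) < η} =ᵐ[μ] {ω | Θ η ≤ Y ω} := by
    rw [ae_eq_set]
    constructor
    · have hemp : {a | prY μ Y (Y a) < η} \ {ω | Θ η ≤ Y ω} = ∅ := by
        ext a
        simp only [mem_diff, mem_setOf_eq, mem_empty_iff_false, iff_false, not_and, not_not]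
        intro h1
        by_contra h2
        exact absurd h1 (not_lt.2 (le_of_lt (claimB a (not_le.1 h2))))
      rw [hemp]
      exact measure_empty
    · refine measure_mono_null ?_
        (measure_union_null (null_level μ hY hatomless η) (hatomless (Θ η)))
      rintro a ⟨h1, h2⟩
      simp only [mem_setOf_eq] at h1 h2
      rcases lt_or_eq_of_le h1 with h | h
      · exact Or.inl (le_antisymm (claimA a h) (not_lt.1 h2))
      · exact Or.inr h.symm
  have hglint : ∫ a, gl a ∂μ = η⁻¹ * ∫ ω in {ω | Θ η ≤ Y ω}, J ω ∂μ := by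
    have e1 : ∫ a, gl a ∂μ
        = η⁻¹ * ∫ a, J a * (if prY μ Y (Y a) < η then 1 else 0) ∂μ := by
      simp only [hgl]
      exact integral_const_mul _ _
    have e2 : (fun a => J a * (if prY μ Y (Y a) < η then 1 else 0))
        = Set.indicator {a | prY μ Y (Y a) < η} J := by
      funext a
      rw [Set.indicator_apply]
      by_cases h : prY μ Y (Y a) < η
      · rw [if_pos h, if_pos (by exact h), mul_one]
      · rw [if_neg h, if_neg (by exact h), mul_zero]
    rw [e1, e2, integral_indicator hmeasset, setIntegral_congr_set hae]
  -- eventual equality with the exact formula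
  have hev : (fun n => ∫ a, g n a ∂μ) =ᶠ[atTop]
      (fun n => ∫ x : Fin n → Ω, topQuantileAvg Y J ⌊η * n⌋₊ x
        ∂(Measure.pi fun _ : Fin n => μ)) := by
    filter_upwards [eventually_ge_atTop 1] with n hn
    obtain ⟨m, rfl⟩ : ∃ m, n = m + 1 := ⟨n - 1, (Nat.succ_pred_eq_of_pos hn).symm⟩
    rw [integral_topQuantileAvg μ hY hJmeas hJbdd m ⌊η * ((m + 1 : ℕ) : ℝ)⌋₊]
    simp only [hg, Nat.add_sub_cancel]
    rw [integral_const_mul]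
  rw [← hglint]
  exact Filter.Tendsto.congr' hev hDCT
end

section
/- Let (Ω, μ) be a probability space, Y : Ω → ℝ measurable with atomless law, and J : Ω → ℝ bounded and measurable. Fix η ∈ (0,1) and integers n ≤ N with ⌊ηn⌋ ≥ 1, and let a_1, …, a_N be i.i.d. samples from μ. For a subset S ⊆ {1,…,N} with |S| = n, let T(S) = (1/⌊ηn⌋) times the sum of J over the ⌊ηn⌋ elements of {a_i : i ∈ S} with the largest Y-values (almost surely unique). Then E[ (1/C(N,n)) · Σ_{S ⊆ {1,…,N}, |S| = n} T(S) ] = E[ (1/⌊ηn⌋) Σ_{j=1}^{⌊ηn⌋} J(a_{(j:n)}) ], where a_{(j:n)} is the sample with the j-th largest Y-value among n fresh i.i.d. samples a_1,…,a_n ∼ μ. -/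
open MeasureTheory Finset

/-- `T(S)`: the average of `J` over the `k` elements of `{x i : i ∈ S}` with the largest
`Y`-values: an element is selected iff fewer than `k` elements of `S` have a strictly larger
`Y`-value. When the `Y`-values are pairwise distinct (almost surely the case for an atomless
law) and `1 ≤ k ≤ |S|`, exactly `k` elements are selected. -/
noncomputable def topAvgOfSubset {Ω : Type*} (Y J : Ω → ℝ) (k : ℕ) {N : ℕ}
    (S : Finset (Fin N)) (x : Fin N → Ω) : ℝ :=
  (k : ℝ)⁻¹ * ∑ i ∈ S, if (S.filter fun l => Y (x i) < Y (x l)).card < k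
    then J (x i) else 0

section RETAAux
variable {Ω : Type*} [MeasurableSpace Ω]

lemma RETA.map_comp_pi (μ : Measure Ω) [IsProbabilityMeasure μ]
    {n N : ℕ} (e : Fin n → Fin N) (he : Function.Injective e) :
    Measure.map (fun x : Fin N → Ω => x ∘ e) (Measure.pi fun _ : Fin N => μ)
      = Measure.pi fun _ : Fin n => μ := by
  have hmeas : Measurable (fun x : Fin N → Ω => x ∘ e) :=
    measurable_pi_lambda _ fun i => measurable_pi_apply (e i)
  refine (Measure.pi_eq fun s hs => ?_).symm
  rw [Measure.map_apply hmeas (MeasurableSet.univ_pi hs)]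
  have hpre : (fun x : Fin N → Ω => x ∘ e) ⁻¹' Set.pi Set.univ s
      = Set.pi Set.univ (fun j => ⋂ i, ⋂ (_ : e i = j), s i) := by
    ext x
    simp only [Set.mem_preimage, Set.mem_pi, Set.mem_univ, forall_true_left,
      Set.mem_iInter, Function.comp]
    constructor
    · rintro h j i rfl; exact h i
    · intro h i; exact h (e i) i rfl
  rw [hpre, Measure.pi_pi]
  have h1 : ∀ j ∈ Finset.univ, j ∉ Finset.image e Finset.univ →
      μ (⋂ i, ⋂ (_ : e i = j), s i) = 1 := by
    intro j _ hj
    have : (⋂ i, ⋂ (_ : e i = j), s i) = Set.univ := by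
      simp only [Finset.mem_image, Finset.mem_univ, true_and, not_exists] at hj
      ext x
      simp only [Set.mem_iInter, Set.mem_univ, iff_true]
      intro i hi; exact absurd hi (hj i)
    rw [this]; exact measure_univ
  rw [← Finset.prod_subset (Finset.subset_univ (Finset.image e Finset.univ)) h1,
    Finset.prod_image (fun a _ b _ h => he h)]
  refine Finset.prod_congr rfl fun i _ => ?_
  congr 1
  ext x
  simp only [Set.mem_iInter]
  constructor
  · intro h; exact h i rfl
  · intro h i' hi'; rwa [he hi']

lemma RETA.term_measurable (Y J : Ω → ℝ) (hY : Measurable Y) (hJ : Measurable J)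
    (k : ℕ) {N : ℕ} (S : Finset (Fin N)) (i : Fin N) :
    Measurable (fun x : Fin N → Ω =>
      if (S.filter fun l => Y (x i) < Y (x l)).card < k then J (x i) else 0) := by
  have hc : Measurable (fun x : Fin N → Ω =>
      ((S.filter fun l => Y (x i) < Y (x l)).card : ℕ)) := by
    simp_rw [Finset.card_filter]
    exact Finset.measurable_sum _ fun l _ => Measurable.ite
      (measurableSet_lt (hY.comp (measurable_pi_apply i)) (hY.comp (measurable_pi_apply l)))
      measurable_const measurable_const
  exact Measurable.ite (measurableSet_lt hc measurable_const)
    (hJ.comp (measurable_pi_apply i)) measurable_const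

lemma RETA.topAvg_measurable (Y J : Ω → ℝ) (hY : Measurable Y) (hJ : Measurable J)
    (k : ℕ) {N : ℕ} (S : Finset (Fin N)) :
    Measurable (fun x : Fin N → Ω => topAvgOfSubset Y J k S x) := by
  unfold topAvgOfSubset
  exact (Finset.measurable_sum _ fun i _ => RETA.term_measurable Y J hY hJ k S i).const_mul _

lemma RETA.topAvg_integrable (μ : Measure Ω) [IsProbabilityMeasure μ]
    (Y J : Ω → ℝ) (hY : Measurable Y) (hJ : Measurable J)
    {C : ℝ} (hC : ∀ ω, |J ω| ≤ C)
    (k : ℕ) {N : ℕ} (S : Finset (Fin N)) :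
    Integrable (fun x : Fin N → Ω => topAvgOfSubset Y J k S x)
      (Measure.pi fun _ : Fin N => μ) := by
  unfold topAvgOfSubset
  refine Integrable.const_mul (integrable_finset_sum _ fun i _ => ?_) _
  refine (integrable_const |C|).mono'
    (RETA.term_measurable Y J hY hJ k S i).aestronglyMeasurable (ae_of_all _ fun x => ?_)
  by_cases h : (S.filter fun l => Y (x i) < Y (x l)).card < k
  · simp only [h, if_true, Real.norm_eq_abs]
    exact (hC _).trans (le_abs_self C)
  · simp [h, abs_nonneg]

lemma RETA.subset_integral (μ : Measure Ω) [IsProbabilityMeasure μ]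
    (Y J : Ω → ℝ) (hY : Measurable Y) (hJ : Measurable J)
    (k : ℕ) {n N : ℕ} (S : Finset (Fin N)) (hcard : S.card = n) :
    ∫ x : Fin N → Ω, topAvgOfSubset Y J k S x ∂(Measure.pi fun _ : Fin N => μ)
      = ∫ x : Fin n → Ω, topAvgOfSubset Y J k Finset.univ x
          ∂(Measure.pi fun _ : Fin n => μ) := by
  set e : Fin n → Fin N := ⇑(S.orderEmbOfFin hcard) with he_def
  have he : Function.Injective e := (S.orderEmbOfFin hcard).injective
  have himg : Finset.image e Finset.univ = S := by
    refine Finset.coe_inj.mp ?_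
    rw [Finset.coe_image, Finset.coe_univ, Set.image_univ]
    exact Finset.range_orderEmbOfFin S hcard
  have hmeas : Measurable (fun x : Fin N → Ω => x ∘ e) :=
    measurable_pi_lambda _ fun i => measurable_pi_apply (e i)
  have hpt : ∀ x : Fin N → Ω,
      topAvgOfSubset Y J k S x = topAvgOfSubset Y J k Finset.univ (x ∘ e) := by
    intro x
    unfold topAvgOfSubset
    congr 1
    rw [← himg, Finset.sum_image (fun a _ b _ h => he h)]
    refine Finset.sum_congr rfl fun i _ => ?_
    have hfc : ((Finset.image e Finset.univ).filter fun l => Y (x (e i)) < Y (x l)).card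
        = (Finset.univ.filter fun l : Fin n => Y ((x ∘ e) i) < Y ((x ∘ e) l)).card := by
      rw [Finset.filter_image, Finset.card_image_of_injective _ he]
      rfl
    simp only [Function.comp] at hfc ⊢
    rw [hfc]
  simp_rw [hpt]
  rw [← RETA.map_comp_pi μ e he,
    integral_map hmeas.aemeasurable
      (RETA.topAvg_measurable Y J hY hJ k Finset.univ).aestronglyMeasurable]

end RETAAux

/-- Let `μ` be a probability measure on `Ω`, `Y : Ω → ℝ` measurable with
atomless law, and `J : Ω → ℝ` bounded and measurable. Fix `η ∈ (0,1)` and `n ≤ N` with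
`⌊ηn⌋ ≥ 1`, and let `a_1, …, a_N` be i.i.d. samples from `μ` (modeled by the product measure on
`Fin N → Ω`). For `S ⊆ {1,…,N}` with `|S| = n`, let `T(S)` be `1/⌊ηn⌋` times the sum of `J` over
the `⌊ηn⌋` elements of `{a_i : i ∈ S}` with the largest `Y`-values. Then
`E[(1/C(N,n)) · ∑_{|S| = n} T(S)]` equals the expectation of the corresponding average computed
from `n` fresh i.i.d. samples, i.e. the RETA resampling estimator is unbiased. -/
theorem reta_subset_estimator_unbiased
    {Ω : Type*} [MeasurableSpace Ω] (μ : Measure Ω) [IsProbabilityMeasure μ]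
    (Y : Ω → ℝ) (hY : Measurable Y)
    (hatomless : ∀ c : ℝ, μ {ω | Y ω = c} = 0)
    (J : Ω → ℝ) (hJmeas : Measurable J) (hJbdd : ∃ C : ℝ, ∀ ω, |J ω| ≤ C)
    (η : ℝ) (hη : η ∈ Set.Ioo (0 : ℝ) 1)
    (n N : ℕ) (hnN : n ≤ N) (hk : 1 ≤ ⌊η * n⌋₊) :
    (∫ x : Fin N → Ω,
        ((N.choose n : ℝ))⁻¹ *
          ∑ S ∈ Finset.powersetCard n (Finset.univ : Finset (Fin N)),
            topAvgOfSubset Y J ⌊η * n⌋₊ S x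
        ∂(Measure.pi fun _ : Fin N => μ))
      = ∫ x : Fin n → Ω, topAvgOfSubset Y J ⌊η * n⌋₊ Finset.univ x
          ∂(Measure.pi fun _ : Fin n => μ) := by
  obtain ⟨C, hC⟩ := hJbdd
  set k := ⌊η * n⌋₊
  rw [MeasureTheory.integral_const_mul,
    integral_finset_sum _ (fun S _ => RETA.topAvg_integrable μ Y J hY hJmeas hC k S)]
  have key : ∀ S ∈ Finset.powersetCard n (Finset.univ : Finset (Fin N)),
      ∫ x : Fin N → Ω, topAvgOfSubset Y J k S x ∂(Measure.pi fun _ : Fin N => μ)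
        = ∫ x : Fin n → Ω, topAvgOfSubset Y J k Finset.univ x
            ∂(Measure.pi fun _ : Fin n => μ) := by
    intro S hS
    rw [Finset.mem_powersetCard] at hS
    exact RETA.subset_integral μ Y J hY hJmeas k S hS.2
  rw [Finset.sum_congr rfl key, Finset.sum_const, Finset.card_powersetCard,
    Finset.card_univ, Fintype.card_fin, nsmul_eq_mul]
  have hpos : (0 : ℝ) < (N.choose n : ℝ) := by exact_mod_cast Nat.choose_pos hnN
  field_simp
end
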